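/- arXiv:1410.3168 — 5 statements merged into one kernel-verified Lean document; each statement's English description precedes it below -/
import Mathlib

section
/- Fix q ≥ 1. There exists a constant C > 0 such that for all n ≥ 2, the diffusion state distance on the path P_n between the endpoints 1 and n satisfies |DSD_q(1,n) − (1+q)^{−1/q} n^{1+1/q}| ≤ C · n^{1/q}. -/
/-- The adjacency relation of the path graph is decidable. -/
instance pathGraphAdjDecidable (n : ℕ) : DecidableRel (SimpleGraph.pathGraph n).Adj :=
  fun _ _ => decidable_of_iff _ SimpleGraph.pathGraph_adj.symm

open Real Finset intervalIntegral

/-- Convex tangent-line inequality from Bernoulli: for `1 ≤ p`,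
`u^p + p u^(p-1) (v-u) ≤ v^p`. -/
lemma tangent_le {u v p : ℝ} (hu : 0 < u) (hv : 0 ≤ v) (hp : 1 ≤ p) :
    u ^ p + p * u ^ (p - 1) * (v - u) ≤ v ^ p := by
  have hs : -1 ≤ v / u - 1 := by
    have := div_nonneg hv hu.le; linarith
  have h := one_add_mul_self_le_rpow_one_add hs hp
  rw [show (1 : ℝ) + (v / u - 1) = v / u by ring, Real.div_rpow hv hu.le] at h
  have hup : 0 < u ^ p := Real.rpow_pos_of_pos hu p
  have h2 := mul_le_mul_of_nonneg_left h hup.le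
  rw [mul_div_cancel₀ _ (ne_of_gt hup)] at h2
  calc u ^ p + p * u ^ (p - 1) * (v - u)
      = u ^ p * (1 + p * (v / u - 1)) := by
        rw [Real.rpow_sub hu p 1, Real.rpow_one]
        field_simp
    _ ≤ v ^ p := h2

/-- Concave tangent-line inequality: for `0 < r ≤ 1`, `a^r ≤ b^r + r b^(r-1) (a-b)`. -/
lemma tangent_ge {a b r : ℝ} (hb : 0 < b) (ha : 0 ≤ a) (hr0 : 0 ≤ r) (hr1 : r ≤ 1) :
    a ^ r ≤ b ^ r + r * b ^ (r - 1) * (a - b) := by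
  have hs : -1 ≤ a / b - 1 := by
    have := div_nonneg ha hb.le; linarith
  have h := rpow_one_add_le_one_add_mul_self hs hr0 hr1
  rw [show (1 : ℝ) + (a / b - 1) = a / b by ring, Real.div_rpow ha hb.le] at h
  have hbp : 0 < b ^ r := Real.rpow_pos_of_pos hb r
  have h2 := mul_le_mul_of_nonneg_left h hbp.le
  rw [mul_div_cancel₀ _ (ne_of_gt hbp)] at h2
  calc a ^ r ≤ b ^ r * (1 + r * (a / b - 1)) := h2
    _ = b ^ r + r * b ^ (r - 1) * (a - b) := by
        rw [Real.rpow_sub hb r 1, Real.rpow_one]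
        field_simp

/-- Lipschitz-type bound for `x ↦ x^q` on `[0, M]`. -/
lemma rpow_diff_le {u v M q : ℝ} (hq : 1 ≤ q) (hM : 0 < M)
    (hu0 : 0 ≤ u) (huM : u ≤ M) (hv0 : 0 ≤ v) (hvM : v ≤ M) :
    |u ^ q - v ^ q| ≤ q * M ^ (q - 1) * |u - v| := by
  have key : ∀ x y : ℝ, 0 ≤ x → x ≤ y → y ≤ M → y ^ q - x ^ q ≤ q * M ^ (q-1) * (y - x) := by
    intro x y hx hxy hyM
    rcases eq_or_lt_of_le (hx.trans hxy) with h0 | hy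
    · rw [← h0]
      have hx0 : x = 0 := le_antisymm (h0 ▸ hxy) hx
      simp [hx0]
    · have h := tangent_le hy hx hq
      have h2 : y ^ q - x ^ q ≤ q * y ^ (q-1) * (y - x) := by nlinarith
      have h3 : y ^ (q-1) ≤ M ^ (q-1) :=
        Real.rpow_le_rpow hy.le hyM (by linarith)
      have h4 : y^(q-1)*(y-x) ≤ M^(q-1)*(y-x) :=
        mul_le_mul_of_nonneg_right h3 (sub_nonneg.mpr hxy)
      calc y ^ q - x ^ q ≤ q*(y^(q-1)*(y-x)) := by rw [← mul_assoc]; exact h2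
        _ ≤ q*(M^(q-1)*(y-x)) := mul_le_mul_of_nonneg_left h4 (by linarith)
        _ = q*M^(q-1)*(y-x) := by ring
  rcases le_total v u with h | h
  · rw [abs_of_nonneg (sub_nonneg.mpr (Real.rpow_le_rpow hv0 h (by linarith))),
      abs_of_nonneg (sub_nonneg.mpr h)]
    exact key v u hv0 h huM
  · rw [abs_of_nonpos (sub_nonpos.mpr (Real.rpow_le_rpow hu0 h (by linarith))),
      abs_of_nonpos (sub_nonpos.mpr h), neg_sub, neg_sub]
    exact key u v hu0 h hvM

lemma contF {m q : ℝ} (hq : 0 ≤ q) : Continuous fun x : ℝ => |m - 2*x| ^ q := by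
  apply Continuous.rpow_const
  · exact (continuous_const.sub (continuous_const.mul continuous_id)).abs
  · exact fun x => Or.inr hq

lemma key_integral {q : ℝ} (hq : 1 ≤ q) (m : ℝ) (hm : 0 ≤ m) :
    ∫ x in (0:ℝ)..m, |m - 2*x| ^ q = m ^ (q+1) / (q+1) := by
  have hq0 : (0:ℝ) ≤ q := by linarith
  have habs : Continuous fun u : ℝ => |u| ^ q := by
    apply Continuous.rpow_const continuous_abs (fun x => Or.inr hq0)
  have h1 : ∫ x in (0:ℝ)..m, |m - 2*x| ^ q
      = ∫ x in (0:ℝ)..m, (fun u : ℝ => |u| ^ q) (m + (-2) * x) := by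
    apply intervalIntegral.integral_congr
    intro x _
    simp only []
    ring_nf
  rw [h1, intervalIntegral.integral_comp_add_mul (fun u : ℝ => |u| ^ q) (by norm_num : (-2:ℝ) ≠ 0) m]
  have h2 : m + (-2) * 0 = m := by ring
  have h3 : m + (-2) * m = -m := by ring
  rw [h2, h3]
  have hint : ∀ a b : ℝ, IntervalIntegrable (fun u : ℝ => |u| ^ q) MeasureTheory.volume a b :=
    fun a b => habs.intervalIntegrable a b
  have hhalf : ∫ u in (0:ℝ)..m, |u| ^ q = m ^ (q+1) / (q+1) := by
    have : ∫ u in (0:ℝ)..m, |u| ^ q = ∫ u in (0:ℝ)..m, u ^ q := by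
      apply intervalIntegral.integral_congr
      intro x hx
      rw [Set.uIcc_of_le hm] at hx
      simp only []
      rw [abs_of_nonneg hx.1]
    rw [this, integral_rpow (Or.inl (by linarith))]
    rw [Real.zero_rpow (by linarith : q + 1 ≠ 0)]
    ring
  have hneg : ∫ u in (-m)..(0:ℝ), |u| ^ q = m ^ (q+1) / (q+1) := by
    have h4 : ∫ u in (0:ℝ)..m, (fun u : ℝ => |u| ^ q) (-u) = ∫ u in (-m)..(-0:ℝ), |u| ^ q :=
      intervalIntegral.integral_comp_neg (fun u : ℝ => |u| ^ q)
    simp only [neg_zero] at h4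
    rw [← h4]
    have : ∫ u in (0:ℝ)..m, (fun u : ℝ => |u| ^ q) (-u) = ∫ u in (0:ℝ)..m, |u| ^ q := by
      apply intervalIntegral.integral_congr
      intro x _
      simp [abs_neg]
    rw [this, hhalf]
  have hsplit : ∫ u in (-m)..m, |u| ^ q
      = (∫ u in (-m)..(0:ℝ), |u| ^ q) + ∫ u in (0:ℝ)..m, |u| ^ q :=
    (intervalIntegral.integral_add_adjacent_intervals (hint _ _) (hint _ _)).symm
  rw [intervalIntegral.integral_symm, hsplit, hneg, hhalf]
  rw [smul_eq_mul]
  ring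

section
variable {q : ℝ}

lemma sum_est (hq : 1 ≤ q) (m : ℕ) (hm : 1 ≤ m) :
    |(∑ j ∈ Finset.range (m+1), |(m:ℝ) - 2*(j:ℝ)| ^ q) - (m:ℝ)^(q+1)/(q+1)|
      ≤ (2*q+1) * (m:ℝ)^q := by
  have hq0 : (0:ℝ) ≤ q := by linarith
  have hm0 : (0:ℝ) < (m:ℝ) := by exact_mod_cast hm
  set F : ℝ → ℝ := fun x => |(m:ℝ) - 2*x| ^ q with hF
  have hcont : Continuous F := by
    apply Continuous.rpow_const
    · exact (continuous_const.sub (continuous_const.mul continuous_id)).abs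
    · exact fun x => Or.inr hq0
  have hint : ∀ a b : ℝ, IntervalIntegrable F MeasureTheory.volume a b :=
    fun a b => hcont.intervalIntegrable a b
  -- the total integral
  have hsum : (∑ j ∈ Finset.range m, ∫ x in ((j:ℕ):ℝ)..((j+1:ℕ):ℝ), F x)
      = (m:ℝ)^(q+1)/(q+1) := by
    rw [intervalIntegral.sum_integral_adjacent_intervals (fun k _ => hint _ _)]
    rw [Nat.cast_zero]
    exact key_integral hq (m:ℝ) hm0.le
  -- per-interval error bound
  have hper : ∀ j ∈ Finset.range m,
      |F (j:ℝ) - ∫ x in ((j:ℕ):ℝ)..((j+1:ℕ):ℝ), F x| ≤ 2*q*(m:ℝ)^(q-1) := by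
    intro j hj
    rw [Finset.mem_range] at hj
    have hj1 : (j:ℝ) + 1 ≤ (m:ℝ) := by exact_mod_cast hj
    have hj0 : (0:ℝ) ≤ (j:ℝ) := Nat.cast_nonneg j
    have hconst : (∫ x in ((j:ℕ):ℝ)..((j+1:ℕ):ℝ), F (j:ℝ)) = F (j:ℝ) := by
      rw [intervalIntegral.integral_const, smul_eq_mul]
      push_cast
      ring_nf
    have hdiff : F (j:ℝ) - (∫ x in ((j:ℕ):ℝ)..((j+1:ℕ):ℝ), F x)
        = ∫ x in ((j:ℕ):ℝ)..((j+1:ℕ):ℝ), (F (j:ℝ) - F x) := by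
      rw [intervalIntegral.integral_sub (by
        exact (continuous_const).intervalIntegrable _ _) (hint _ _)] at *
      rw [hconst]
    rw [hdiff]
    have hbound : ∀ x ∈ Set.uIoc ((j:ℕ):ℝ) ((j+1:ℕ):ℝ),
        ‖F (j:ℝ) - F x‖ ≤ 2*q*(m:ℝ)^(q-1) := by
      intro x hx
      rw [Set.uIoc_of_le (by push_cast; linarith)] at hx
      obtain ⟨hx1, hx2⟩ := hx
      push_cast at hx1 hx2
      have hu0 : (0:ℝ) ≤ |(m:ℝ) - 2*(j:ℝ)| := abs_nonneg _
      have huM : |(m:ℝ) - 2*(j:ℝ)| ≤ (m:ℝ) := by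
        rw [abs_le]; constructor <;> nlinarith
      have hv0 : (0:ℝ) ≤ |(m:ℝ) - 2*x| := abs_nonneg _
      have hvM : |(m:ℝ) - 2*x| ≤ (m:ℝ) := by
        rw [abs_le]; constructor <;> nlinarith
      have hdist : abs (|(m:ℝ) - 2*(j:ℝ)| - |(m:ℝ) - 2*x|) ≤ 2 := by
        have h1 := abs_sub_abs_le_abs_sub ((m:ℝ) - 2*(j:ℝ)) ((m:ℝ) - 2*x)
        have h2 := abs_sub_abs_le_abs_sub ((m:ℝ) - 2*x) ((m:ℝ) - 2*(j:ℝ))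
        rw [abs_le]
        have h3 : |(m:ℝ) - 2*(j:ℝ) - ((m:ℝ) - 2*x)| = 2*(x - (j:ℝ)) := by
          rw [show (m:ℝ) - 2*(j:ℝ) - ((m:ℝ) - 2*x) = 2*(x-(j:ℝ)) by ring]
          rw [abs_of_nonneg (by linarith)]
        have h4 : |(m:ℝ) - 2*x - ((m:ℝ) - 2*(j:ℝ))| = 2*(x - (j:ℝ)) := by
          rw [show (m:ℝ) - 2*x - ((m:ℝ) - 2*(j:ℝ)) = -(2*(x-(j:ℝ))) by ring, abs_neg,
            abs_of_nonneg (by linarith)]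
        rw [h3] at h1; rw [h4] at h2
        constructor <;> linarith
      have := rpow_diff_le hq hm0 hu0 huM hv0 hvM
      rw [Real.norm_eq_abs]
      calc |F (j:ℝ) - F x| ≤ q * (m:ℝ)^(q-1) * abs (|(m:ℝ) - 2*(j:ℝ)| - |(m:ℝ) - 2*x|) := this
        _ ≤ q * (m:ℝ)^(q-1) * 2 := by
            apply mul_le_mul_of_nonneg_left hdist
            positivity
        _ = 2*q*(m:ℝ)^(q-1) := by ring
    have := intervalIntegral.norm_integral_le_of_norm_le_const hbound
    rw [Real.norm_eq_abs] at this
    have habs1 : |((j+1:ℕ):ℝ) - ((j:ℕ):ℝ)| = 1 := by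
      push_cast; rw [show ((j:ℝ)+1) - (j:ℝ) = 1 by ring, abs_one]
    rw [habs1, mul_one] at this
    exact this
  -- combine over range m
  have hmain : |(∑ j ∈ Finset.range m, F (j:ℝ)) - (m:ℝ)^(q+1)/(q+1)| ≤ 2*q*(m:ℝ)^q := by
    rw [← hsum, ← Finset.sum_sub_distrib]
    calc |∑ j ∈ Finset.range m, (F (j:ℝ) - ∫ x in ((j:ℕ):ℝ)..((j+1:ℕ):ℝ), F x)|
        ≤ ∑ j ∈ Finset.range m, |F (j:ℝ) - ∫ x in ((j:ℕ):ℝ)..((j+1:ℕ):ℝ), F x| :=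
          Finset.abs_sum_le_sum_abs _ _
      _ ≤ ∑ j ∈ Finset.range m, 2*q*(m:ℝ)^(q-1) := Finset.sum_le_sum hper
      _ = (m:ℝ) * (2*q*(m:ℝ)^(q-1)) := by
          rw [Finset.sum_const, Finset.card_range, nsmul_eq_mul]
      _ = 2*q*(m:ℝ)^q := by
          rw [show q = 1 + (q-1) by ring, Real.rpow_add hm0, Real.rpow_one]
          ring_nf
  rw [Finset.sum_range_succ]
  have hlast : |(m:ℝ) - 2*((m:ℕ):ℝ)| ^ q = (m:ℝ)^q := by
    rw [show (m:ℝ) - 2*((m:ℕ):ℝ) = -(m:ℝ) by push_cast; ring, abs_neg,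
      abs_of_nonneg hm0.le]
  have h1 : (∑ j ∈ Finset.range m, F (j:ℝ)) = ∑ j ∈ Finset.range m, |(m:ℝ) - 2*(j:ℝ)| ^ q := rfl
  rw [h1] at hmain
  rw [hlast]
  set A := ∑ j ∈ Finset.range m, |(m:ℝ) - 2*(j:ℝ)| ^ q with hA
  set I := (m:ℝ)^(q+1)/(q+1) with hI
  have hnn : (0:ℝ) ≤ (m:ℝ)^q := Real.rpow_nonneg hm0.le q
  have htri : |(A + (m:ℝ)^q) - I| ≤ |A - I| + (m:ℝ)^q := by
    calc |(A + (m:ℝ)^q) - I| = |(A - I) + (m:ℝ)^q| := by ring_nf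
      _ ≤ |A - I| + |(m:ℝ)^q| := abs_add_le _ _
      _ = |A - I| + (m:ℝ)^q := by rw [abs_of_nonneg hnn]
  linarith
end

lemma single_eval {n : ℕ} (h : Fin n → ℝ) (p : Fin n → Prop) [DecidablePred p]
    (t : ℕ) (ht : t < n) (hp : ∀ s : Fin n, p s ↔ (s:ℕ) = t) :
    (∑ k : Fin n, if p k then h k else 0) = h ⟨t, ht⟩ := by
  rw [Finset.sum_eq_single (⟨t, ht⟩ : Fin n)]
  · rw [if_pos]; rw [hp]
  · intro k _ hk
    rw [if_neg]
    rw [hp]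
    intro hc
    exact hk (Fin.ext hc)
  · intro hmem; exact absurd (Finset.mem_univ _) hmem

lemma single_eval_zero {n : ℕ} (h : Fin n → ℝ) (p : Fin n → Prop) [DecidablePred p]
    (hp : ∀ s : Fin n, ¬ p s) :
    (∑ k : Fin n, if p k then h k else 0) = 0 :=
  Finset.sum_eq_zero fun k _ => if_neg (hp k)

lemma nbr_eval {n : ℕ} (h : Fin n → ℝ) (y : Fin n) :
    ∑ k, h k * (if (SimpleGraph.pathGraph n).Adj k y then (1:ℝ) else 0)
    = (∑ k : Fin n, if ((k:ℕ)+1 = (y:ℕ)) then h k else 0)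
      + (∑ k : Fin n, if ((y:ℕ)+1 = (k:ℕ)) then h k else 0) := by
  rw [← Finset.sum_add_distrib]
  apply Finset.sum_congr rfl
  intro k _
  by_cases hadj : (SimpleGraph.pathGraph n).Adj k y
  · rw [if_pos hadj]
    rcases SimpleGraph.pathGraph_adj.mp hadj with h1 | h2
    · rw [if_pos h1, if_neg (by omega), mul_one, add_zero]
    · rw [if_pos h2, if_neg (by omega), mul_one, zero_add]
  · rw [if_neg hadj]
    have hnor := fun h => hadj (SimpleGraph.pathGraph_adj.mpr h)
    rw [if_neg (fun h1 => hnor (Or.inl h1)), if_neg (fun h2 => hnor (Or.inr h2)),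
      mul_zero, add_zero]

lemma green_formula {n : ℕ} (hn : 2 ≤ n) (d : Fin n → ℝ)
    (hd : ∀ i, d i = if (i : ℕ) = 0 ∨ (i : ℕ) = n - 1 then 1 else 2)
    (𝔾 : Matrix (Fin n) (Fin n) ℝ)
    (hG : ∀ x y : Fin n,
      (𝔾 * (1 - (Matrix.diagonal fun i => (d i)⁻¹)
          * (SimpleGraph.pathGraph n).adjMatrix ℝ)) x y
        = (if x = y then (1 : ℝ) else 0) - d y / (2 * ((n : ℝ) - 1)))
    (hrow : ∀ x : Fin n, ∑ y, 𝔾 x y = 0) :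
    ∀ j : Fin n, 𝔾 (⟨0, by have := hd; omega⟩ : Fin n) j - 𝔾 (⟨n - 1, by have := hd; omega⟩ : Fin n) j
      = d j * (((n:ℝ) - 1)/2 - ((j:ℕ):ℝ)) := by
  have hd0 : ∀ i : Fin n, d i ≠ 0 := by
    intro i
    rw [hd i]
    split <;> norm_num
  set i0 : Fin n := ⟨0, by omega⟩ with hi0
  set i1 : Fin n := ⟨n - 1, by omega⟩ with hi1
  have hne : i0 ≠ i1 := by
    intro h
    have := congrArg Fin.val h
    simp [hi0, hi1] at this
    omega
  set f : Fin n → ℝ := fun j => 𝔾 i0 j - 𝔾 i1 j with hf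
  -- the key equation
  have E : ∀ y : Fin n,
      f y - ∑ k : Fin n, (f k * (d k)⁻¹) * (if (SimpleGraph.pathGraph n).Adj k y then (1:ℝ) else 0)
      = (if i0 = y then (1:ℝ) else 0) - (if i1 = y then (1:ℝ) else 0) := by
    intro y
    have expand : ∀ x : Fin n,
        (𝔾 * (1 - (Matrix.diagonal fun i => (d i)⁻¹)
          * (SimpleGraph.pathGraph n).adjMatrix ℝ)) x y
        = 𝔾 x y - ∑ k : Fin n, (𝔾 x k * (d k)⁻¹)
            * (if (SimpleGraph.pathGraph n).Adj k y then (1:ℝ) else 0) := by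
      intro x
      rw [Matrix.mul_apply]
      simp only [Matrix.sub_apply, Matrix.one_apply, Matrix.diagonal_mul,
        SimpleGraph.adjMatrix_apply, mul_sub]
      rw [Finset.sum_sub_distrib]
      congr 1
      · simp [Finset.sum_ite_eq', Finset.mem_univ]
      · apply Finset.sum_congr rfl
        intro k _
        ring
    have h0 := hG i0 y
    have h1 := hG i1 y
    rw [expand i0] at h0
    rw [expand i1] at h1
    calc f y - ∑ k : Fin n, (f k * (d k)⁻¹) * (if (SimpleGraph.pathGraph n).Adj k y then (1:ℝ) else 0)
        = (𝔾 i0 y - ∑ k : Fin n, (𝔾 i0 k * (d k)⁻¹)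
            * (if (SimpleGraph.pathGraph n).Adj k y then (1:ℝ) else 0))
          - (𝔾 i1 y - ∑ k : Fin n, (𝔾 i1 k * (d k)⁻¹)
            * (if (SimpleGraph.pathGraph n).Adj k y then (1:ℝ) else 0)) := by
          simp only [hf]
          have hterm : ∀ k : Fin n, k ∈ Finset.univ →
              ((𝔾 i0 k - 𝔾 i1 k) * (d k)⁻¹) * (if (SimpleGraph.pathGraph n).Adj k y then (1:ℝ) else 0)
              = (𝔾 i0 k * (d k)⁻¹) * (if (SimpleGraph.pathGraph n).Adj k y then (1:ℝ) else 0)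
                - (𝔾 i1 k * (d k)⁻¹) * (if (SimpleGraph.pathGraph n).Adj k y then (1:ℝ) else 0) := by
            intro k _; ring
          rw [Finset.sum_congr rfl hterm, Finset.sum_sub_distrib]
          ring
      _ = ((if i0 = y then (1:ℝ) else 0) - d y / (2 * ((n : ℝ) - 1)))
          - ((if i1 = y then (1:ℝ) else 0) - d y / (2 * ((n : ℝ) - 1))) := by rw [h0, h1]
      _ = (if i0 = y then (1:ℝ) else 0) - (if i1 = y then (1:ℝ) else 0) := by ring
  have h0v : (i0:ℕ) = 0 := rfl
  have h1v : (i1:ℕ) = n - 1 := rfl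
  set c : ℝ := f i0 with hc
  have claim : ∀ j : ℕ, ∀ hj : j < n, f ⟨j, hj⟩ = d ⟨j, hj⟩ * (c - (j:ℝ)) := by
    intro j
    induction j using Nat.strong_induction_on with
    | _ j ih =>
      match j with
      | 0 =>
        intro hj
        have hd00 : d ⟨0, hj⟩ = 1 := by rw [hd]; norm_num
        rw [hd00]
        show f i0 = 1 * (c - ((0:ℕ):ℝ))
        rw [← hc]
        norm_num
      | 1 =>
        intro hj
        have hE := E i0
        have hL : ∑ k : Fin n, (f k * (d k)⁻¹)
              * (if (SimpleGraph.pathGraph n).Adj k i0 then (1:ℝ) else 0)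
            = f ⟨1, hj⟩ * (d ⟨1, hj⟩)⁻¹ := by
          rw [nbr_eval (fun k => f k * (d k)⁻¹) i0]
          rw [single_eval_zero (fun k => f k * (d k)⁻¹) _
            (fun s => by rw [h0v]; omega)]
          rw [single_eval (fun k => f k * (d k)⁻¹) _ 1 hj
            (fun s => by rw [h0v]; omega)]
          ring
        rw [hL, if_pos rfl, if_neg (fun h => hne h.symm)] at hE
        have h2 : f ⟨1, hj⟩ * (d ⟨1, hj⟩)⁻¹ = c - 1 := by
          have hfi : f i0 = c := rfl
          linarith
        have h3 := congrArg (fun z => z * d ⟨1, hj⟩) h2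
        rw [inv_mul_cancel_right₀ (hd0 _)] at h3
        rw [h3]
        push_cast
        ring
      | (t+2) =>
        intro hj
        have hjt1 : t+1 < n := by omega
        have hjt : t < n := by omega
        have hE := E ⟨t+1, hjt1⟩
        have hL : ∑ k : Fin n, (f k * (d k)⁻¹)
              * (if (SimpleGraph.pathGraph n).Adj k (⟨t+1, hjt1⟩ : Fin n) then (1:ℝ) else 0)
            = f ⟨t, hjt⟩ * (d ⟨t, hjt⟩)⁻¹ + f ⟨t+2, hj⟩ * (d ⟨t+2, hj⟩)⁻¹ := by
          rw [nbr_eval (fun k => f k * (d k)⁻¹) ⟨t+1, hjt1⟩]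
          rw [single_eval (fun k => f k * (d k)⁻¹) _ t hjt
            (fun s => by show ((s:ℕ)+1 = t+1) ↔ _; omega)]
          rw [single_eval (fun k => f k * (d k)⁻¹) _ (t+2) hj
            (fun s => by show (t+1+1 = (s:ℕ)) ↔ _; omega)]
        rw [hL, if_neg (fun h => by
            have hv : (0:ℕ) = t + 1 := congrArg Fin.val h
            omega),
          if_neg (fun h => by
            have hv : (n - 1 : ℕ) = t + 1 := congrArg Fin.val h
            omega)] at hE
        have hft : f ⟨t, hjt⟩ * (d ⟨t, hjt⟩)⁻¹ = c - (t:ℝ) := by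
          rw [ih t (by omega) hjt, mul_comm (d ⟨t, hjt⟩) _, mul_inv_cancel_right₀ (hd0 _)]
        have hdt1 : d ⟨t+1, hjt1⟩ = 2 := by
          rw [hd]
          rw [if_neg]
          show ¬(t+1 = 0 ∨ t+1 = n-1)
          omega
        have hfy : f ⟨t+1, hjt1⟩ = 2 * (c - ((t:ℝ)+1)) := by
          rw [ih (t+1) (by omega) hjt1, hdt1]
          push_cast
          ring
        have h4 : f ⟨t+2, hj⟩ * (d ⟨t+2, hj⟩)⁻¹ = c - ((t:ℝ)+2) := by
          rw [hfy, hft] at hE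
          linarith
        have h5 := congrArg (fun z => z * d ⟨t+2, hj⟩) h4
        rw [inv_mul_cancel_right₀ (hd0 _)] at h5
        rw [h5]
        push_cast
        ring
  have hformula : ∀ j : Fin n, f j = d j * (c - ((j:ℕ):ℝ)) := by
    intro j
    have := claim (j:ℕ) j.isLt
    simpa using this
  -- the row sums pin down c
  have hsumf : ∑ j : Fin n, f j = 0 := by
    simp only [hf]
    rw [Finset.sum_sub_distrib, hrow i0, hrow i1]
    ring
  have hn1 : (1:ℝ) ≤ (n:ℝ) - 1 := by
    have : (2:ℝ) ≤ (n:ℝ) := by exact_mod_cast hn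
    linarith
  have hgauss : ∑ j : Fin n, ((j:ℕ):ℝ) = (n:ℝ)*((n:ℝ)-1)/2 := by
    rw [Fin.sum_univ_eq_sum_range (fun i => (i:ℝ)) n]
    have h := Finset.sum_range_id_mul_two n
    have hcast : ((∑ i ∈ Finset.range n, i : ℕ):ℝ) * 2 = (n:ℝ) * ((n:ℝ)-1) := by
      rw [← Nat.cast_ofNat, ← Nat.cast_mul, h, Nat.cast_mul, Nat.cast_sub (by omega), Nat.cast_one]
    rw [Nat.cast_sum] at hcast
    linarith
  have hterm : ∀ j : Fin n, d j * (c - ((j:ℕ):ℝ))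
      = 2*(c - ((j:ℕ):ℝ)) - (if (j:ℕ) = 0 then c - ((j:ℕ):ℝ) else 0)
        - (if (j:ℕ) = n-1 then c - ((j:ℕ):ℝ) else 0) := by
    intro j
    rw [hd]
    by_cases hj0 : (j:ℕ) = 0
    · have hjn : ¬((j:ℕ) = n-1) := by omega
      rw [if_pos (Or.inl hj0), if_pos hj0, if_neg hjn]
      ring
    · by_cases hjn : (j:ℕ) = n-1
      · rw [if_pos (Or.inr hjn), if_neg hj0, if_pos hjn]
        ring
      · rw [if_neg (by tauto), if_neg hj0, if_neg hjn]
        ring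
  have hsum2 : ∑ j : Fin n, d j * (c - ((j:ℕ):ℝ)) = 2*((n:ℝ)-1)*c - ((n:ℝ)-1)^2 := by
    rw [Finset.sum_congr rfl (fun j _ => hterm j), Finset.sum_sub_distrib,
      Finset.sum_sub_distrib]
    rw [single_eval (fun j : Fin n => c - ((j:ℕ):ℝ)) _ 0 (by omega) (fun s => Iff.rfl)]
    rw [single_eval (fun j : Fin n => c - ((j:ℕ):ℝ)) _ (n-1) (by omega) (fun s => Iff.rfl)]
    have h2 : ∑ x : Fin n, 2*(c - ((x:ℕ):ℝ)) = 2*((n:ℝ)*c - (n:ℝ)*((n:ℝ)-1)/2) := by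
      have : ∀ x : Fin n, 2*(c - ((x:ℕ):ℝ)) = 2*c - 2*((x:ℕ):ℝ) := fun x => by ring
      rw [Finset.sum_congr rfl (fun x _ => this x), Finset.sum_sub_distrib,
        Finset.sum_const, Finset.card_univ, Fintype.card_fin, nsmul_eq_mul,
        ← Finset.mul_sum, hgauss]
      ring
    rw [h2]
    simp only [Fin.val_mk]
    rw [Nat.cast_sub (by omega : 1 ≤ n), Nat.cast_one, Nat.cast_zero]
    ring
  have hceq : c = ((n:ℝ)-1)/2 := by
    have h := hsum2
    rw [Finset.sum_congr rfl (fun j _ => (hformula j).symm), hsumf] at h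
    have h2 : ((n:ℝ)-1) * (2*c) = ((n:ℝ)-1) * ((n:ℝ)-1) := by linear_combination -h
    have h3 := mul_left_cancel₀ (by linarith : ((n:ℝ)-1) ≠ 0) h2
    linear_combination h3 / 2
  intro j
  have := hformula j
  rw [hceq] at this
  exact this

lemma final_bound (q r K C : ℝ) (N₀ : ℕ) (hq : 1 ≤ q) (hq0 : 0 < q)
    (hrdef : r = 1/q) (hr0 : 0 < r) (hr1 : r ≤ 1) (hK0 : 0 < K)
    (hN₀ : N₀ = ⌈(2*K*(q+1))⌉₊ + 2)
    (hC : C = r * (2*(q+1))^(1 - r) * K + (2 + K) * (N₀:ℝ) + 1)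
    (n : ℕ) (hn0 : (0:ℝ) < n) (hn1R : (2:ℝ) ≤ (n:ℝ)) (S B : ℝ) (hS0 : 0 ≤ S)
    (hB : B = (n:ℝ)^(q+1)/(q+1)) (hBpos : 0 < B)
    (hKbound : |S - B| ≤ K * (n:ℝ)^q) :
    |S^r - B^r| ≤ C * (n:ℝ)^r := by
  by_cases hbig : 2*K*(q+1) ≤ (n:ℝ)
  · -- large n
    have hq1 : (0:ℝ) < q + 1 := by linarith
    have hnq : (0:ℝ) ≤ (n:ℝ)^q := Real.rpow_nonneg hn0.le q
    have hKn : K * (n:ℝ)^q ≤ B/2 := by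
      have hpow : (n:ℝ)^(q+1) = (n:ℝ)^q * (n:ℝ) := Real.rpow_add_one hn0.ne' q
      rw [hB, hpow, div_div]
      rw [le_div_iff₀ (by linarith : (0:ℝ) < (q+1)*2)]
      nlinarith [mul_le_mul_of_nonneg_left hbig hnq]
    have hSlb : B/2 ≤ S := by
      have := abs_le.mp hKbound
      linarith [this.1]
    have hB2pos : 0 < B/2 := by linarith
    have hmain : |S ^ r - B ^ r| ≤ r * (B/2)^(r-1) * (K * (n:ℝ)^q) := by
      have hB2r : 0 ≤ (B/2)^(r-1) := Real.rpow_nonneg hB2pos.le _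
      rcases le_total B S with hBS | hSB
      · have ht := tangent_ge hBpos hS0 hr0.le hr1
        have hmono : B^(r-1) ≤ (B/2)^(r-1) :=
          Real.rpow_le_rpow_of_nonpos hB2pos (by linarith) (by linarith)
        have habs : |S^r - B^r| = S^r - B^r := abs_of_nonneg (by
          have := Real.rpow_le_rpow hBpos.le hBS hr0.le
          linarith)
        rw [habs]
        have hSB' : S - B ≤ K * (n:ℝ)^q := by
          have := abs_le.mp hKbound
          linarith [this.2]
        have h1 : r * B^(r-1) * (S - B) ≤ r * (B/2)^(r-1) * (S - B) :=
          mul_le_mul_of_nonneg_right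
            (mul_le_mul_of_nonneg_left hmono hr0.le) (by linarith)
        have h2 : r * (B/2)^(r-1) * (S - B) ≤ r * (B/2)^(r-1) * (K * (n:ℝ)^q) :=
          mul_le_mul_of_nonneg_left hSB' (mul_nonneg hr0.le hB2r)
        linarith [ht]
      · have hSpos : 0 < S := lt_of_lt_of_le hB2pos hSlb
        have ht := tangent_ge hSpos hBpos.le hr0.le hr1
        have hmono : S^(r-1) ≤ (B/2)^(r-1) :=
          Real.rpow_le_rpow_of_nonpos hB2pos hSlb (by linarith)
        have habs : |S^r - B^r| = B^r - S^r := by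
          rw [abs_sub_comm]
          exact abs_of_nonneg (by
            have := Real.rpow_le_rpow hS0 hSB hr0.le
            linarith)
        rw [habs]
        have hSB' : B - S ≤ K * (n:ℝ)^q := by
          have := abs_le.mp hKbound
          linarith [this.1]
        have h1 : r * S^(r-1) * (B - S) ≤ r * (B/2)^(r-1) * (B - S) :=
          mul_le_mul_of_nonneg_right
            (mul_le_mul_of_nonneg_left hmono hr0.le) (by linarith)
        have h2 : r * (B/2)^(r-1) * (B - S) ≤ r * (B/2)^(r-1) * (K * (n:ℝ)^q) :=
          mul_le_mul_of_nonneg_left hSB' (mul_nonneg hr0.le hB2r)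
        linarith [ht]
    have hpow_id : (B/2)^(r-1) * (n:ℝ)^q = (2*(q+1))^(1-r) * (n:ℝ)^r := by
      have hB2 : B/2 = (n:ℝ)^(q+1) * (2*(q+1))⁻¹ := by
        rw [hB, div_div, mul_comm (q+1) (2:ℝ), div_eq_mul_inv]
      rw [hB2, Real.mul_rpow (Real.rpow_nonneg hn0.le _) (inv_nonneg.mpr (by linarith)),
        ← Real.rpow_mul hn0.le,
        Real.inv_rpow (by linarith : (0:ℝ) ≤ 2*(q+1)), ← Real.rpow_neg (by linarith),
        show -(r-1) = 1-r by ring]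
      rw [mul_comm ((n:ℝ)^((q+1)*(r-1))) _, mul_assoc, ← Real.rpow_add hn0]
      congr 1
      rw [hrdef]; field_simp; ring
    have hfinal : r * (B/2)^(r-1) * (K * (n:ℝ)^q) = (r * (2*(q+1))^(1-r) * K) * (n:ℝ)^r := by
      calc r * (B/2)^(r-1) * (K * (n:ℝ)^q) = (r*K) * ((B/2)^(r-1) * (n:ℝ)^q) := by ring
        _ = (r*K) * ((2*(q+1))^(1-r) * (n:ℝ)^r) := by rw [hpow_id]
        _ = (r * (2*(q+1))^(1-r) * K) * (n:ℝ)^r := by ring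
    rw [hfinal] at hmain
    have hnr : 0 ≤ (n:ℝ)^r := Real.rpow_nonneg hn0.le r
    have hCge : r * (2*(q+1))^(1-r) * K ≤ C := by
      rw [hC]
      have : 0 ≤ (2+K) * (N₀:ℝ) := mul_nonneg (by linarith) (Nat.cast_nonneg _)
      linarith
    calc |S^r - B^r| ≤ (r * (2*(q+1))^(1-r) * K) * (n:ℝ)^r := hmain
      _ ≤ C * (n:ℝ)^r := mul_le_mul_of_nonneg_right hCge hnr
  · -- small n
    push_neg at hbig
    have hnN : (n:ℝ) ≤ (N₀:ℝ) := by
      have h2 : 2*K*(q+1) ≤ (⌈2*K*(q+1)⌉₊ : ℝ) := Nat.le_ceil _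
      have h3 : ((⌈2*K*(q+1)⌉₊ : ℕ) : ℝ) ≤ (N₀:ℝ) := by
        rw [hN₀]; push_cast; linarith
      linarith
    have hn1' : (1:ℝ) ≤ (n:ℝ) := by linarith
    have hnq_le : (n:ℝ)^q ≤ (n:ℝ)^(q+1) :=
      Real.rpow_le_rpow_of_exponent_le hn1' (by linarith)
    have hBle : B ≤ (n:ℝ)^(q+1) := by
      rw [hB, div_le_iff₀ (by linarith : (0:ℝ) < q+1)]
      nlinarith [Real.rpow_nonneg hn0.le (q+1)]
    have hSub : S ≤ (1+K) * (n:ℝ)^(q+1) := by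
      have h1 := (abs_le.mp hKbound).2
      have h2 : K * (n:ℝ)^q ≤ K * (n:ℝ)^(q+1) :=
        mul_le_mul_of_nonneg_left hnq_le hK0.le
      nlinarith
    have h4 : ((n:ℝ)^(q+1))^r = (n:ℝ) * (n:ℝ)^r := by
      rw [← Real.rpow_mul hn0.le, show (q+1)*r = 1 + r by rw [hrdef]; field_simp,
        Real.rpow_add hn0, Real.rpow_one]
    have hnr : 0 ≤ (n:ℝ)^r := Real.rpow_nonneg hn0.le r
    have hSr : S^r ≤ (1+K) * (N₀:ℝ) * (n:ℝ)^r := by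
      have h1 : S^r ≤ ((1+K) * (n:ℝ)^(q+1))^r := Real.rpow_le_rpow hS0 hSub hr0.le
      have h2 : ((1+K) * (n:ℝ)^(q+1))^r = (1+K)^r * ((n:ℝ)^(q+1))^r :=
        Real.mul_rpow (by linarith) (Real.rpow_nonneg hn0.le _)
      have h3 : (1+K)^r ≤ (1+K) := by
        calc (1+K)^r ≤ (1+K)^(1:ℝ) := Real.rpow_le_rpow_of_exponent_le (by linarith) hr1
          _ = 1+K := Real.rpow_one _
      have h5 : 0 ≤ ((n:ℝ)^(q+1))^r := Real.rpow_nonneg (Real.rpow_nonneg hn0.le _) r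
      calc S^r ≤ (1+K)^r * ((n:ℝ)^(q+1))^r := by rw [← h2]; exact h1
        _ ≤ (1+K) * ((n:ℝ)^(q+1))^r := mul_le_mul_of_nonneg_right h3 h5
        _ = (1+K) * ((n:ℝ) * (n:ℝ)^r) := by rw [h4]
        _ ≤ (1+K) * ((N₀:ℝ) * (n:ℝ)^r) :=
            mul_le_mul_of_nonneg_left
              (mul_le_mul_of_nonneg_right hnN hnr) (by linarith)
        _ = (1+K) * (N₀:ℝ) * (n:ℝ)^r := by ring
    have hBrle : B^r ≤ (N₀:ℝ) * (n:ℝ)^r := by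
      have h2 : B^r ≤ ((n:ℝ)^(q+1))^r := Real.rpow_le_rpow hBpos.le hBle hr0.le
      calc B^r ≤ (n:ℝ) * (n:ℝ)^r := by rw [← h4]; exact h2
        _ ≤ (N₀:ℝ) * (n:ℝ)^r := mul_le_mul_of_nonneg_right hnN hnr
    have hSr0 : 0 ≤ S^r := Real.rpow_nonneg hS0 r
    have hBr0 : 0 ≤ B^r := Real.rpow_nonneg hBpos.le r
    have habs : |S^r - B^r| ≤ S^r + B^r := by
      rw [abs_le]
      constructor <;> linarith
    have hCge : (1+K) * (N₀:ℝ) + (N₀:ℝ) ≤ C := by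
      rw [hC]
      have h0 : 0 ≤ r * (2*(q+1))^(1-r) * K :=
        mul_nonneg (mul_nonneg hr0.le (Real.rpow_nonneg (by linarith) _)) hK0.le
      have h1 : (2+K)*(N₀:ℝ) = (1+K)*(N₀:ℝ) + (N₀:ℝ) := by ring
      linarith
    calc |S^r - B^r| ≤ S^r + B^r := habs
      _ ≤ (1+K) * (N₀:ℝ) * (n:ℝ)^r + (N₀:ℝ) * (n:ℝ)^r := by linarith
      _ = ((1+K) * (N₀:ℝ) + (N₀:ℝ)) * (n:ℝ)^r := by ring
      _ ≤ C * (n:ℝ)^r := mul_le_mul_of_nonneg_right hCge hnr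


/-- Fix `q ≥ 1`. There is a constant `C > 0` such that for all `n ≥ 2`,
the diffusion state distance on the path `P_n` between the endpoints satisfies
`|DSD_q(1,n) − (1+q)^{−1/q} n^{1+1/q}| ≤ C n^{1/q}`. -/
theorem dsd_path_endpoints_asymptotics
    (q : ℝ) (hq : 1 ≤ q) :
    ∃ C : ℝ, 0 < C ∧
      ∀ (n : ℕ) (hn : 2 ≤ n)
        (d : Fin n → ℝ), (∀ i, d i = if (i : ℕ) = 0 ∨ (i : ℕ) = n - 1 then 1 else 2) →
      ∀ (𝔾 : Matrix (Fin n) (Fin n) ℝ),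
        (∀ x y : Fin n,
          (𝔾 * (1 - (Matrix.diagonal fun i => (d i)⁻¹)
              * (SimpleGraph.pathGraph n).adjMatrix ℝ)) x y
            = (if x = y then (1 : ℝ) else 0) - d y / (2 * ((n : ℝ) - 1))) →
        (∀ x : Fin n, ∑ y, 𝔾 x y = 0) →
        |(∑ j, |𝔾 (⟨0, by omega⟩ : Fin n) j - 𝔾 (⟨n - 1, by omega⟩ : Fin n) j| ^ q) ^ (1 / q)
            - (1 + q) ^ (-(1 / q)) * (n : ℝ) ^ (1 + 1 / q)|
          ≤ C * (n : ℝ) ^ (1 / q) := by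

  have hq0 : (0:ℝ) < q := by linarith
  set r : ℝ := 1/q with hrdef
  have hr0 : 0 < r := by rw [hrdef]; exact one_div_pos.mpr hq0
  have hr1 : r ≤ 1 := by
    rw [hrdef, div_le_one hq0]; exact hq
  set K : ℝ := 2*q + 4 with hKdef
  have hK0 : (0:ℝ) < K := by rw [hKdef]; linarith
  set N₀ : ℕ := ⌈(2*K*(q+1))⌉₊ + 2 with hN₀
  set C : ℝ := r * (2*(q+1))^(1 - r) * K + (2 + K) * (N₀:ℝ) + 1 with hC
  have hCpos : 0 < C := by
    have h1 : 0 ≤ r * (2*(q+1))^(1 - r) * K :=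
      mul_nonneg (mul_nonneg hr0.le (Real.rpow_nonneg (by linarith) _)) hK0.le
    have h2 : 0 ≤ (2 + K) * (N₀:ℝ) := mul_nonneg (by linarith) (Nat.cast_nonneg _)
    rw [hC]
    linarith
  clear_value r K N₀ C
  refine ⟨C, hCpos, ?_⟩
  intro n hn d hd 𝔾 hG hrow
  have hform := green_formula hn d hd 𝔾 hG hrow
  have hn0 : (0:ℝ) < n := by
    have : 0 < n := by omega
    exact_mod_cast this
  have hn1R : (2:ℝ) ≤ (n:ℝ) := by exact_mod_cast hn
  set m : ℕ := n - 1 with hm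
  have hm1 : 1 ≤ m := by omega
  have hmn : m + 1 = n := by omega
  have hmR : (m:ℝ) = (n:ℝ) - 1 := by
    rw [hm, Nat.cast_sub (by omega), Nat.cast_one]
  have hmR1 : (1:ℝ) ≤ (m:ℝ) := by rw [hmR]; linarith
  have hmR0 : (0:ℝ) < (m:ℝ) := by linarith
  -- rewrite the sum via the formula
  have hsum_eq : (∑ j, |𝔾 (⟨0, by omega⟩ : Fin n) j - 𝔾 (⟨n - 1, by omega⟩ : Fin n) j| ^ q)
      = ∑ j : Fin n, |d j * (((n:ℝ) - 1)/2 - ((j:ℕ):ℝ))| ^ q :=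
    Finset.sum_congr rfl (fun j _ => by rw [hform j])
  rw [hsum_eq]
  set S : ℝ := ∑ j : Fin n, |d j * (((n:ℝ) - 1)/2 - ((j:ℕ):ℝ))| ^ q with hS
  have hS0 : 0 ≤ S :=
    Finset.sum_nonneg fun j _ => Real.rpow_nonneg (abs_nonneg _) q
  set B : ℝ := (n:ℝ)^(q+1)/(q+1) with hB
  have hBpos : 0 < B := by
    have := Real.rpow_pos_of_pos hn0 (q+1)
    rw [hB]
    exact div_pos this (by linarith)
  -- B^r is the target quantity
  have hBr : B ^ r = (1 + q) ^ (-r) * (n : ℝ) ^ (1 + r) := by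
    rw [hB, div_eq_mul_inv,
      Real.mul_rpow (Real.rpow_nonneg hn0.le _) (inv_nonneg.mpr (by linarith : (0:ℝ) ≤ q+1)),
      ← Real.rpow_mul hn0.le,
      Real.inv_rpow (by linarith : (0:ℝ) ≤ q+1), ← Real.rpow_neg (by linarith : (0:ℝ) ≤ q+1),
      show (q+1)*r = 1 + r by rw [hrdef]; field_simp,
      show (q+1 : ℝ) = 1+q by ring]
    ring
  rw [← hBr]
  -- comparison of S with T
  set T : ℝ := ∑ j : Fin n, |(m:ℝ) - 2*((j:ℕ):ℝ)| ^ q with hT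
  clear_value S T
  have hmq_nonneg : (0:ℝ) ≤ (m:ℝ)^q := Real.rpow_nonneg hmR0.le q
  have half_le : ((m:ℝ)/2)^q ≤ (m:ℝ)^q :=
    Real.rpow_le_rpow (by linarith) (by linarith) hq0.le
  have hST : |S - T| ≤ 2 * (m:ℝ)^q := by
    have hper : ∀ j : Fin n,
        |(|d j * (((n:ℝ) - 1)/2 - ((j:ℕ):ℝ))| ^ q) - (|(m:ℝ) - 2*((j:ℕ):ℝ)| ^ q)|
        ≤ (if (j:ℕ) = 0 then (m:ℝ)^q else 0) + (if (j:ℕ) = m then (m:ℝ)^q else 0) := by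
      intro j
      by_cases hj0 : (j:ℕ) = 0
      · have hjm : ¬((j:ℕ) = m) := by omega
        rw [if_pos hj0, if_neg hjm, add_zero]
        have hjc : ((j:ℕ):ℝ) = 0 := by rw [hj0]; norm_num
        have hdj : d j = 1 := by rw [hd]; rw [if_pos (Or.inl hj0)]
        rw [hjc, hdj, ← hmR]
        rw [show |(1:ℝ) * ((m:ℝ)/2 - 0)| = (m:ℝ)/2 by rw [abs_of_nonneg (by linarith)]; ring]
        rw [show |(m:ℝ) - 2*0| = (m:ℝ) by rw [abs_of_nonneg (by linarith)]; ring]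
        rw [abs_of_nonpos (by linarith)]
        have : (0:ℝ) ≤ ((m:ℝ)/2)^q := Real.rpow_nonneg (by linarith) q
        linarith
      · by_cases hjm : (j:ℕ) = m
        · rw [if_neg hj0, if_pos hjm, zero_add]
          have hjc : ((j:ℕ):ℝ) = (m:ℝ) := by rw [hjm]
          have hdj : d j = 1 := by rw [hd]; rw [if_pos (Or.inr (by omega))]
          rw [hjc, hdj, ← hmR]
          rw [show |(1:ℝ) * ((m:ℝ)/2 - (m:ℝ))| = (m:ℝ)/2 by
            rw [show (1:ℝ) * ((m:ℝ)/2 - (m:ℝ)) = -((m:ℝ)/2) by ring, abs_neg,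
              abs_of_nonneg (by linarith)]]
          rw [show |(m:ℝ) - 2*(m:ℝ)| = (m:ℝ) by
            rw [show (m:ℝ) - 2*(m:ℝ) = -(m:ℝ) by ring, abs_neg, abs_of_nonneg (by linarith)]]
          rw [abs_of_nonpos (by linarith)]
          have : (0:ℝ) ≤ ((m:ℝ)/2)^q := Real.rpow_nonneg (by linarith) q
          linarith
        · rw [if_neg hj0, if_neg hjm, add_zero]
          have hdj : d j = 2 := by rw [hd]; rw [if_neg (by omega)]
          rw [hdj, ← hmR,
            show |(2:ℝ) * ((m:ℝ)/2 - ((j:ℕ):ℝ))| = |(m:ℝ) - 2*((j:ℕ):ℝ)| by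
              rw [show (2:ℝ) * ((m:ℝ)/2 - ((j:ℕ):ℝ)) = (m:ℝ) - 2*((j:ℕ):ℝ) by ring]]
          simp
    calc |S - T| = |∑ j : Fin n, ((|d j * (((n:ℝ) - 1)/2 - ((j:ℕ):ℝ))| ^ q)
          - (|(m:ℝ) - 2*((j:ℕ):ℝ)| ^ q))| := by
            rw [hS, hT, ← Finset.sum_sub_distrib]
      _ ≤ ∑ j : Fin n, |(|d j * (((n:ℝ) - 1)/2 - ((j:ℕ):ℝ))| ^ q)
          - (|(m:ℝ) - 2*((j:ℕ):ℝ)| ^ q)| := Finset.abs_sum_le_sum_abs _ _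
      _ ≤ ∑ j : Fin n, ((if (j:ℕ) = 0 then (m:ℝ)^q else 0)
          + (if (j:ℕ) = m then (m:ℝ)^q else 0)) := Finset.sum_le_sum (fun j _ => hper j)
      _ = 2 * (m:ℝ)^q := by
          rw [Finset.sum_add_distrib,
            single_eval (fun _ : Fin n => (m:ℝ)^q) _ 0 (by omega) (fun s => Iff.rfl),
            single_eval (fun _ : Fin n => (m:ℝ)^q) _ m (by omega) (fun s => Iff.rfl)]
          ring
  -- T is close to m^{q+1}/(q+1)
  have hTest : |T - (m:ℝ)^(q+1)/(q+1)| ≤ (2*q+1) * (m:ℝ)^q := by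
    have h := sum_est hq m hm1
    have hTeq : T = ∑ j ∈ Finset.range (m+1), |(m:ℝ) - 2*(j:ℝ)| ^ q := by
      rw [hT, Fin.sum_univ_eq_sum_range (fun j : ℕ => |(m:ℝ) - 2*(j:ℝ)| ^ q) n, ← hmn]
    rw [hTeq]
    exact h
  -- replace m by n
  have hnm_pow : 0 ≤ (n:ℝ)^(q+1) - (m:ℝ)^(q+1) ∧ (n:ℝ)^(q+1) - (m:ℝ)^(q+1) ≤ (q+1)*(n:ℝ)^q := by
    constructor
    · have := Real.rpow_le_rpow hmR0.le (by linarith : (m:ℝ) ≤ (n:ℝ)) (by linarith : (0:ℝ) ≤ q+1)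
      linarith
    · have h := tangent_le hn0 (by linarith : (0:ℝ) ≤ (m:ℝ)) (by linarith : (1:ℝ) ≤ q+1)
      rw [show q + 1 - 1 = q by ring] at h
      have : (m:ℝ) - (n:ℝ) = -1 := by rw [hmR]; ring
      rw [this] at h
      linarith
  have hmq_le : (m:ℝ)^q ≤ (n:ℝ)^q := Real.rpow_le_rpow hmR0.le (by linarith) hq0.le
  have hKbound : |S - B| ≤ K * (n:ℝ)^q := by
    have h1 : |S - (m:ℝ)^(q+1)/(q+1)| ≤ (2*q+3) * (m:ℝ)^q := by
      have := abs_sub_abs_le_abs_sub (S - (m:ℝ)^(q+1)/(q+1)) (S - T)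
      have htri : |S - (m:ℝ)^(q+1)/(q+1)| ≤ |S - T| + |T - (m:ℝ)^(q+1)/(q+1)| := by
        have := abs_add_le (S - T) (T - (m:ℝ)^(q+1)/(q+1))
        calc |S - (m:ℝ)^(q+1)/(q+1)| = |(S - T) + (T - (m:ℝ)^(q+1)/(q+1))| := by ring_nf
          _ ≤ |S - T| + |T - (m:ℝ)^(q+1)/(q+1)| := abs_add_le _ _
      linarith
    have h2 : |(m:ℝ)^(q+1)/(q+1) - B| ≤ (n:ℝ)^q := by
      obtain ⟨ha, hb⟩ := hnm_pow
      have hq1 : (0:ℝ) < q+1 := by linarith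
      rw [hB, div_sub_div_same, abs_div,
        abs_of_nonpos (by linarith : (m:ℝ)^(q+1) - (n:ℝ)^(q+1) ≤ 0), abs_of_pos hq1,
        div_le_iff₀ hq1]
      linarith
    calc |S - B| = |(S - (m:ℝ)^(q+1)/(q+1)) + ((m:ℝ)^(q+1)/(q+1) - B)| := by ring_nf
      _ ≤ |S - (m:ℝ)^(q+1)/(q+1)| + |(m:ℝ)^(q+1)/(q+1) - B| := abs_add_le _ _
      _ ≤ (2*q+3) * (m:ℝ)^q + (n:ℝ)^q := by
          have h3 : (2*q+3) * (m:ℝ)^q ≤ (2*q+3) * (n:ℝ)^q :=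
            mul_le_mul_of_nonneg_left hmq_le (by linarith)
          linarith
      _ ≤ K * (n:ℝ)^q := by
          have : (2*q+3) * (m:ℝ)^q ≤ (2*q+3) * (n:ℝ)^q :=
            mul_le_mul_of_nonneg_left hmq_le (by linarith)
          have hnq : (0:ℝ) ≤ (n:ℝ)^q := Real.rpow_nonneg hn0.le q
          rw [hKdef]
          nlinarith
  exact final_bound q r K C N₀ hq hq0 hrdef hr0 hr1 hK0 hN₀ hC n hn0 hn1R S B hS0 hB
    hBpos hKbound
end

section
/- Let n = 2k be even with k ≥ 2, and let C_n be the cycle graph on vertices 1,…,n. Then the Green's function 𝔾 of C_n is given by 𝔾(x,y) = (1/(2k))(k − |x−y|_c)² − k/6 − 1/(12k) for all vertices x, y, where |x−y|_c denotes the graph distance between x and y in C_n. -/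
/-- The graph distance `|x−y|_c = min(|x−y|, n−|x−y|)` between two vertices of the cycle
`C_n`. -/
def cycleDist (n : ℕ) (x y : Fin n) : ℕ :=
  min ((x : ℤ) - (y : ℤ)).natAbs (n - ((x : ℤ) - (y : ℤ)).natAbs)

/-- Sum of the first `n` naturals, as a real number. -/
lemma aux_sum_range_id (n : ℕ) : ∑ i ∈ Finset.range n, (i : ℝ) = n * (n - 1) / 2 := by
  induction n with
  | zero => simp
  | succ m ih => rw [Finset.sum_range_succ, ih]; push_cast; ring

/-- Sum of squares of the first `n` naturals, as a real number. -/
lemma aux_sum_range_sq (n : ℕ) :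
    ∑ i ∈ Finset.range n, (i : ℝ) ^ 2 = n * (n - 1) * (2 * n - 1) / 6 := by
  induction n with
  | zero => simp
  | succ m ih => rw [Finset.sum_range_succ, ih]; push_cast; ring

/-- A discrete-harmonic function on the cycle with zero sum vanishes. -/
lemma aux_harmonic_zero (n : ℕ) [NeZero n] (hn : 2 ≤ n) (h : Fin n → ℝ)
    (hrec : ∀ y : Fin n, h y = (h (y - 1) + h (y + 1)) / 2)
    (hsum : ∑ y, h y = 0) : ∀ y, h y = 0 := by
  have hone : ((1 : Fin n) : ℕ) = 1 := by
    rw [Fin.val_one']; exact Nat.mod_eq_of_lt (by omega)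
  have hsucc : ∀ m (hm : m + 1 < n), (⟨m, by omega⟩ : Fin n) + 1 = ⟨m + 1, hm⟩ := by
    intro m hm
    rw [Fin.add_def]
    apply Fin.ext
    simp only [hone]
    exact Nat.mod_eq_of_lt hm
  have hzero : (0 : Fin n) = ⟨0, by omega⟩ := Fin.ext (by simp)
  -- the step function is constant
  set d : Fin n → ℝ := fun y => h (y + 1) - h y with hd
  have hstep : ∀ y, d (y + 1) = d y := by
    intro y
    have h1 := hrec (y + 1)
    have h2 : y + 1 - 1 = y := by abel
    rw [h2] at h1
    simp only [hd]
    linarith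
  have hconst : ∀ y, d y = d 0 := by
    have : ∀ m (hm : m < n), d ⟨m, hm⟩ = d 0 := by
      intro m
      induction m with
      | zero => intro hm; rw [hzero]
      | succ p ih =>
          intro hm
          rw [← hsucc p hm, hstep, ih (by omega)]
    intro y
    rcases y with ⟨m, hm⟩
    exact this m hm
  have hsumd : ∑ y, d y = 0 := by
    have e : ∑ y : Fin n, h (y + 1) = ∑ y : Fin n, h y :=
      Fintype.sum_equiv (Equiv.addRight 1) _ _ (fun y => rfl)
    simp only [hd]
    rw [Finset.sum_sub_distrib, e, sub_self]
  have hd0 : d 0 = 0 := by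
    have e : ∑ y : Fin n, d y = n * d 0 := by
      rw [Finset.sum_congr rfl (fun y _ => hconst y)]
      simp [Finset.card_univ, mul_comm]
    rw [e] at hsumd
    have hn0 : (n : ℝ) ≠ 0 := by positivity
    exact by
      rcases mul_eq_zero.mp hsumd with h' | h'
      · exact absurd h' hn0
      · exact h'
  have hflat : ∀ y, h (y + 1) = h y := by
    intro y
    have := hconst y
    rw [hd0] at this
    simp only [hd] at this
    linarith
  have hconstH : ∀ y, h y = h 0 := by
    have : ∀ m (hm : m < n), h ⟨m, hm⟩ = h 0 := by
      intro m
      induction m with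
      | zero => intro hm; rw [hzero]
      | succ p ih =>
          intro hm
          rw [← hsucc p hm, hflat, ih (by omega)]
    intro y
    rcases y with ⟨m, hm⟩
    exact this m hm
  have h0 : h 0 = 0 := by
    have e : ∑ y : Fin n, h y = n * h 0 := by
      rw [Finset.sum_congr rfl (fun y _ => hconstH y)]
      simp [Finset.card_univ, mul_comm]
    rw [e] at hsum
    have hn0 : (n : ℝ) ≠ 0 := by positivity
    rcases mul_eq_zero.mp hsum with h' | h'
    · exact absurd h' hn0
    · exact h'
  intro y
  rw [hconstH y, h0]

/-- `cycleDist` in terms of the value of the difference in `Fin n`. -/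
lemma aux_cycleDist_eq (n : ℕ) (hn : 0 < n) (x y : Fin n) :
    cycleDist n x y = min ((y - x) : Fin n).val (n - ((y - x) : Fin n).val) := by
  have hx := x.isLt
  have hy := y.isLt
  have hsub : ((y - x) : Fin n).val = (n - x.val + y.val) % n := by
    rw [Fin.sub_def]
  have hcast : ((x : ℤ) - (y : ℤ)) = (x.val : ℤ) - (y.val : ℤ) := rfl
  rcases le_or_gt x.val y.val with hle | hlt
  · have ht : ((y - x) : Fin n).val = y.val - x.val := by
      rw [hsub]
      have e : n - x.val + y.val = (y.val - x.val) + n := by omega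
      rw [e, Nat.add_mod_right]
      exact Nat.mod_eq_of_lt (by omega)
    have ha : (((x : ℤ) - (y : ℤ)).natAbs) = y.val - x.val := by
      rw [hcast]; omega
    rw [cycleDist, ht, ha]
  · have ht : ((y - x) : Fin n).val = n - (x.val - y.val) := by
      rw [hsub]
      have e : n - x.val + y.val = n - (x.val - y.val) := by omega
      rw [e]
      exact Nat.mod_eq_of_lt (by omega)
    have ha : (((x : ℤ) - (y : ℤ)).natAbs) = x.val - y.val := by
      rw [hcast]; omega
    rw [cycleDist, ht, ha]
    omega

/-- The square `(k − cycleDist x y)²` equals `(k − (y−x).val)²` over the even cycle. -/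
lemma aux_sq_eq (k : ℕ) (hk : 1 ≤ k) (x y : Fin (2 * k)) :
    ((k : ℝ) - (cycleDist (2 * k) x y : ℝ)) ^ 2
      = ((k : ℝ) - (((y - x) : Fin (2 * k)).val : ℝ)) ^ 2 := by
  have hlt := ((y - x) : Fin (2 * k)).isLt
  rw [aux_cycleDist_eq (2 * k) (by omega) x y]
  set t := ((y - x) : Fin (2 * k)).val with htdef
  rcases le_total t (2 * k - t) with h | h
  · rw [min_eq_left h]
  · rw [min_eq_right h]
    have e : ((2 * k - t : ℕ) : ℝ) = 2 * (k : ℝ) - (t : ℝ) := by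
      push_cast [Nat.cast_sub (le_of_lt hlt)]; ring
    rw [e]; ring

/-- For even `n = 2k` with `k ≥ 2`, the Green's function of the cycle `C_n`
is `𝔾(x,y) = (1/(2k))(k − |x−y|_c)² − k/6 − 1/(12k)`. -/
theorem green_function_even_cycle
    (k : ℕ) (hk : 2 ≤ k)
    -- the Green's function `𝔾` of `C_{2k}` (all degrees are `2`, `vol(C_{2k}) = 2·(2k)`)
    (𝔾 : Matrix (Fin (2 * k)) (Fin (2 * k)) ℝ)
    (hG1 : ∀ x y : Fin (2 * k),
      (𝔾 * (1 - ((Matrix.diagonal fun _ => (2 : ℝ)⁻¹ : Matrix (Fin (2 * k)) (Fin (2 * k)) ℝ))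
          * (SimpleGraph.cycleGraph (2 * k)).adjMatrix ℝ)) x y
        = (if x = y then (1 : ℝ) else 0) - 2 / (2 * (2 * (k : ℝ))))
    (hG2 : ∀ x : Fin (2 * k), ∑ y, 𝔾 x y = 0) :
    ∀ x y : Fin (2 * k),
      𝔾 x y = (1 / (2 * (k : ℝ))) * ((k : ℝ) - (cycleDist (2 * k) x y : ℝ)) ^ 2
        - (k : ℝ) / 6 - 1 / (12 * (k : ℝ)) := by
  haveI : NeZero (2 * k) := ⟨by omega⟩
  have hk0 : (k : ℝ) ≠ 0 := by positivity
  have hone : ((1 : Fin (2 * k)) : ℕ) = 1 := by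
    rw [Fin.val_one']; exact Nat.mod_eq_of_lt (by omega)
  -- the candidate Green's function
  set G0 : Fin (2 * k) → Fin (2 * k) → ℝ := fun x y =>
    (1 / (2 * (k : ℝ))) * ((k : ℝ) - (cycleDist (2 * k) x y : ℝ)) ^ 2
      - (k : ℝ) / 6 - 1 / (12 * (k : ℝ)) with hG0def
  -- adjacency in the cycle
  have hadj : ∀ z y : Fin (2 * k),
      (SimpleGraph.cycleGraph (2 * k)).Adj z y ↔ (z = y - 1 ∨ z = y + 1) := by
    intro z y
    rw [SimpleGraph.cycleGraph_adj']
    constructor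
    · rintro (h | h)
      · right
        have e : z - y = 1 := Fin.ext (by rw [hone]; exact h)
        have := sub_eq_iff_eq_add.mp e
        rw [this, add_comm]
      · left
        have e : y - z = 1 := Fin.ext (by rw [hone]; exact h)
        have : y = 1 + z := sub_eq_iff_eq_add.mp e
        rw [this]; abel
    · rintro (rfl | rfl)
      · right; rw [show y - (y - 1) = 1 by abel, hone]
      · left; rw [show y + 1 - y = 1 by abel, hone]
  have hne : ∀ y : Fin (2 * k), (y - 1 : Fin (2 * k)) ≠ y + 1 := by
    intro y h
    have h2 : (-1 : Fin (2 * k)) = 1 := by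
      have := h
      rw [sub_eq_add_neg] at this
      exact add_left_cancel this
    have h3 : (1 : Fin (2 * k)) + 1 = 0 := neg_eq_iff_add_eq_zero.mp h2
    have := congrArg Fin.val h3
    rw [Fin.add_def] at this
    simp only [hone, Fin.val_zero] at this
    have : (1 + 1) % (2 * k) = 0 := this
    rw [Nat.mod_eq_of_lt (by omega)] at this
    omega
  -- sum against the adjacency matrix
  have hsumadj : ∀ (f : Fin (2 * k) → ℝ) (y : Fin (2 * k)),
      ∑ z, f z * (if (SimpleGraph.cycleGraph (2 * k)).Adj z y then (1 : ℝ) else 0)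
        = f (y - 1) + f (y + 1) := by
    intro f y
    have e : ∀ z, f z * (if (SimpleGraph.cycleGraph (2 * k)).Adj z y then (1 : ℝ) else 0)
        = (if z = y - 1 then f z else 0) + (if z = y + 1 then f z else 0) := by
      intro z
      by_cases h1 : z = y - 1
      · subst h1
        rw [if_pos ((hadj _ y).mpr (Or.inl rfl)), if_pos rfl, if_neg (hne y)]
        ring
      · by_cases h2 : z = y + 1
        · subst h2
          rw [if_pos ((hadj _ y).mpr (Or.inr rfl)), if_pos rfl,
            if_neg (fun hc => hne y hc.symm)]
          ring
        · rw [if_neg (fun hA => Or.elim ((hadj z y).mp hA) h1 h2),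
            if_neg h1, if_neg h2]
          ring
    rw [Finset.sum_congr rfl (fun z _ => e z), Finset.sum_add_distrib,
      Finset.sum_ite_eq', Finset.sum_ite_eq']
    simp
  -- the recurrence satisfied by 𝔾
  have hrec : ∀ x y : Fin (2 * k),
      𝔾 x y - (𝔾 x (y - 1) + 𝔾 x (y + 1)) / 2
        = (if x = y then (1 : ℝ) else 0) - 1 / (2 * (k : ℝ)) := by
    intro x y
    have h := hG1 x y
    rw [Matrix.mul_sub, Matrix.mul_one, Matrix.sub_apply, ← Matrix.mul_assoc] at h
    rw [Matrix.mul_apply] at h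
    simp only [Matrix.mul_diagonal, SimpleGraph.adjMatrix_apply] at h
    have hs := hsumadj (fun z => 𝔾 x z * (2 : ℝ)⁻¹) y
    beta_reduce at hs
    rw [hs] at h
    have h24 : 2 / (2 * (2 * (k : ℝ))) = 1 / (2 * (k : ℝ)) := by
      field_simp
    rw [h24] at h
    rw [← h]; ring
  -- the recurrence satisfied by G0
  have hval_sub_one : ∀ z : Fin (2 * k), (z - 1 : Fin (2 * k)).val = (2 * k - 1 + z.val) % (2 * k) := by
    intro z
    rw [Fin.sub_def, hone]
  have hval_add_one : ∀ z : Fin (2 * k), (z + 1 : Fin (2 * k)).val = (z.val + 1) % (2 * k) := by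
    intro z
    rw [Fin.add_def, hone]
  have hrec0 : ∀ x y : Fin (2 * k),
      G0 x y - (G0 x (y - 1) + G0 x (y + 1)) / 2
        = (if x = y then (1 : ℝ) else 0) - 1 / (2 * (k : ℝ)) := by
    intro x y
    set t := ((y - x) : Fin (2 * k)).val with htdef
    have hlt : t < 2 * k := ((y - x) : Fin (2 * k)).isLt
    have hm : ((y - 1 - x) : Fin (2 * k)).val = (2 * k - 1 + t) % (2 * k) := by
      rw [show y - 1 - x = (y - x) - 1 by abel, hval_sub_one]
    have hp : ((y + 1 - x) : Fin (2 * k)).val = (t + 1) % (2 * k) := by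
      rw [show y + 1 - x = (y - x) + 1 by abel, hval_add_one]
    have s0 := aux_sq_eq k (by omega) x y
    have sm := aux_sq_eq k (by omega) x (y - 1)
    have sp := aux_sq_eq k (by omega) x (y + 1)
    rw [hm] at sm
    rw [hp] at sp
    rw [← htdef] at s0
    simp only [hG0def]
    rw [s0, sm, sp]
    by_cases h0 : t = 0
    · -- x = y
      have hxy : x = y := by
        have : y - x = 0 := Fin.ext (by rw [← htdef, h0]; simp)
        have := sub_eq_zero.mp this
        exact this.symm
      rw [if_pos hxy, h0]
      have em : (2 * k - 1 + 0) % (2 * k) = 2 * k - 1 := Nat.mod_eq_of_lt (by omega)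
      have ep : (0 + 1) % (2 * k) = 1 := Nat.mod_eq_of_lt (by omega)
      rw [em, ep]
      have c1 : ((2 * k - 1 : ℕ) : ℝ) = 2 * (k : ℝ) - 1 := by
        push_cast [Nat.cast_sub (by omega : 1 ≤ 2 * k)]; ring
      rw [c1]
      push_cast
      field_simp
      ring
    · -- x ≠ y
      have hxy : ¬ x = y := by
        intro h
        apply h0
        rw [htdef, h, sub_self]
        rfl
      rw [if_neg hxy]
      have em : (2 * k - 1 + t) % (2 * k) = t - 1 := by
        have e : 2 * k - 1 + t = (t - 1) + 2 * k := by omega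
        rw [e, Nat.add_mod_right]
        exact Nat.mod_eq_of_lt (by omega)
      rw [em]
      have cm : ((t - 1 : ℕ) : ℝ) = (t : ℝ) - 1 := by
        push_cast [Nat.cast_sub (by omega : 1 ≤ t)]; ring
      rw [cm]
      have sp2 : ((k : ℝ) - (((t + 1) % (2 * k) : ℕ) : ℝ)) ^ 2
          = ((k : ℝ) - ((t : ℝ) + 1)) ^ 2 := by
        by_cases h1 : t + 1 = 2 * k
        · rw [h1, Nat.mod_self]
          have : (t : ℝ) = 2 * (k : ℝ) - 1 := by
            have : ((t : ℕ) : ℝ) + 1 = ((2 * k : ℕ) : ℝ) := by exact_mod_cast congrArg Nat.cast h1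
            push_cast at this
            linarith
          rw [this]
          push_cast
          ring
        · rw [Nat.mod_eq_of_lt (by omega)]
          push_cast
          ring
      rw [sp2]
      field_simp
      ring
  -- row sums of G0 vanish
  have hsum0 : ∀ x : Fin (2 * k), ∑ y, G0 x y = 0 := by
    intro x
    have e1 : ∑ y : Fin (2 * k), ((k : ℝ) - (cycleDist (2 * k) x y : ℝ)) ^ 2
        = ∑ i ∈ Finset.range (2 * k), ((k : ℝ) - (i : ℝ)) ^ 2 := by
      have e2 : ∑ y : Fin (2 * k), ((k : ℝ) - (cycleDist (2 * k) x y : ℝ)) ^ 2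
          = ∑ z : Fin (2 * k), ((k : ℝ) - (z.val : ℝ)) ^ 2 := by
        apply Fintype.sum_equiv (Equiv.subRight x)
        intro y
        rw [aux_sq_eq k (by omega) x y]
        rfl
      rw [e2, ← Fin.sum_univ_eq_sum_range (fun i => ((k : ℝ) - (i : ℝ)) ^ 2) (2 * k)]
    have e3 : ∑ i ∈ Finset.range (2 * k), ((k : ℝ) - (i : ℝ)) ^ 2
        = (2 * k) * (k : ℝ) ^ 2 - 2 * (k : ℝ) * (∑ i ∈ Finset.range (2 * k), (i : ℝ))
          + ∑ i ∈ Finset.range (2 * k), (i : ℝ) ^ 2 := by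
      have expand : ∀ i : ℕ,
          ((k : ℝ) - (i : ℝ)) ^ 2 = ((k : ℝ) ^ 2 - 2 * (k : ℝ) * (i : ℝ)) + (i : ℝ) ^ 2 :=
        fun i => by ring
      simp_rw [expand]
      rw [Finset.sum_add_distrib, Finset.sum_sub_distrib, ← Finset.mul_sum,
        Finset.sum_const, Finset.card_range, nsmul_eq_mul]
      push_cast
      ring
    have e4 := aux_sum_range_id (2 * k)
    have e5 := aux_sum_range_sq (2 * k)
    simp only [hG0def]
    rw [Finset.sum_sub_distrib, Finset.sum_sub_distrib, ← Finset.mul_sum, e1, e3, e4, e5,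
      Finset.sum_const, Finset.sum_const, Finset.card_univ]
    simp only [Fintype.card_fin, nsmul_eq_mul]
    push_cast
    field_simp
    ring
  -- conclude by uniqueness
  intro x y
  have hH := aux_harmonic_zero (2 * k) (by omega) (fun y => 𝔾 x y - G0 x y)
    (by
      intro z
      have h1 := hrec x z
      have h2 := hrec0 x z
      beta_reduce
      linarith)
    (by
      beta_reduce
      rw [Finset.sum_sub_distrib, hG2 x, hsum0 x, sub_self])
  have := hH y
  beta_reduce at this
  have : 𝔾 x y = G0 x y := by linarith
  rw [this, hG0def]
end

section
/- Let n = 2k+1 be odd with k ≥ 1, and let C_n be the cycle graph on vertices 1,…,n. Then the Green's function 𝔾 of C_n is given by 𝔾(x,y) = (2/(2k+1)) · C(k + 1 − |x−y|_c, 2) − (k² + k)/(3(2k+1)) for all vertices x, y, where |x−y|_c denotes the graph distance between x and y in C_n and C(m,2) = m(m−1)/2 is the binomial coefficient. -/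
/-- Candidate Green's function value, as a function of a real "distance" `t`. -/
noncomputable def gq (k : ℕ) (t : ℝ) : ℝ :=
  (((k : ℝ) + 1 - t) * ((k : ℝ) - t)) / (2 * (k : ℝ) + 1)
    - ((k : ℝ) ^ 2 + (k : ℝ)) / (3 * (2 * (k : ℝ) + 1))

lemma gq_symm (k : ℕ) (t : ℝ) : gq k (2 * (k : ℝ) + 1 - t) = gq k t := by
  unfold gq; ring

lemma gq_lap (k : ℕ) (t : ℝ) :
    gq k t - (gq k (t + 1) + gq k (t - 1)) / 2 = -(2 / (2 * (2 * (k : ℝ) + 1))) := by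
  have h : (2 * (k : ℝ) + 1) ≠ 0 := by positivity
  unfold gq; field_simp; ring

lemma gq_zero (k : ℕ) :
    gq k 0 - gq k 1 = 1 - 2 / (2 * (2 * (k : ℝ) + 1)) := by
  have h : (2 * (k : ℝ) + 1) ≠ 0 := by positivity
  unfold gq; field_simp; ring

lemma sumS (k m : ℕ) :
    ∑ i ∈ Finset.range m, (((k : ℝ) + 1 - i) * ((k : ℝ) - i))
      = (m : ℝ) * ((m : ℝ) - 1) * (2 * (m : ℝ) - 1) / 6
        - (2 * (k : ℝ) + 1) * (m : ℝ) * ((m : ℝ) - 1) / 2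
        + (k : ℝ) * ((k : ℝ) + 1) * (m : ℝ) := by
  induction m with
  | zero => simp
  | succ m ih =>
      rw [Finset.sum_range_succ, ih]
      push_cast
      ring

lemma gq_sum (k : ℕ) : ∑ z : Fin (2 * k + 1), gq k (z.val : ℝ) = 0 := by
  have h : (2 * (k : ℝ) + 1) ≠ 0 := by positivity
  rw [Fin.sum_univ_eq_sum_range (fun i => gq k (i : ℝ)) (2 * k + 1)]
  unfold gq
  rw [Finset.sum_sub_distrib, ← Finset.sum_div, sumS, Finset.sum_const, Finset.card_range, nsmul_eq_mul]
  push_cast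
  field_simp
  ring

open Fin.NatCast in
/-- Uniqueness: a function on `Fin n` that is discrete-harmonic (w.r.t. the cycle Laplacian)
and sums to zero is zero. -/
lemma myHarmonicZero (n : ℕ) [NeZero n] (hn : 0 < n) (h : Fin n → ℝ)
    (hrec : ∀ y : Fin n, h y - (h (y + 1) + h (y - 1)) / 2 = 0)
    (hsum : ∑ y, h y = 0) : ∀ y, h y = 0 := by
  set d : Fin n → ℝ := fun z => h (z + 1) - h z with hd
  have hstep : ∀ z, d (z + 1) = d z := by
    intro z
    have h1 := hrec (z + 1)
    have e1 : z + 1 - 1 = z := by abel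
    rw [e1] at h1
    show h (z + 1 + 1) - h (z + 1) = h (z + 1) - h z
    linarith
  have keyconst : ∀ (f : Fin n → ℝ), (∀ z, f (z + 1) = f z) → ∀ z, f z = f 0 := by
    intro f hf z
    have key : ∀ i : ℕ, f (i : Fin n) = f 0 := by
      intro i
      induction i with
      | zero => norm_num
      | succ i ih => rw [Nat.cast_add_one, hf, ih]
    rw [← Fin.cast_val_eq_self z]
    exact key z.val
  have shiftsum : ∀ (f : Fin n → ℝ), ∑ z : Fin n, f (z + 1) = ∑ z, f z := by
    intro f
    exact Fintype.sum_equiv (Equiv.addRight 1) _ _ (fun z => rfl)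
  have constsum : ∀ (f : Fin n → ℝ), (∀ z, f (z + 1) = f z) → (∑ z, f z = 0) → ∀ z, f z = 0 := by
    intro f hf hs z
    have h1 : ∑ z : Fin n, f z = n * f 0 := by
      rw [Finset.sum_congr rfl (fun z _ => keyconst f hf z)]
      simp [Finset.card_univ, mul_comm]
    have h0 : f 0 = 0 := by
      have hn' : (n : ℝ) ≠ 0 := by positivity
      have := h1.symm.trans hs
      exact (mul_eq_zero.mp this).resolve_left hn'
    rw [keyconst f hf z, h0]
  have dsum : ∑ z, d z = 0 := by
    simp only [hd]
    rw [Finset.sum_sub_distrib, shiftsum h, sub_self]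
  have dzero : ∀ z, d z = 0 := constsum d hstep dsum
  have hconst : ∀ z, h (z + 1) = h z := by
    intro z
    have := dzero z
    simp only [hd] at this
    linarith
  exact constsum h hconst hsum

lemma two_ne_zero_fin (k : ℕ) (hk : 1 ≤ k) : ((1 : Fin (2 * k + 1)) + 1) ≠ 0 := by
  haveI : NeZero (2 * k + 1) := ⟨by omega⟩
  intro hcon
  have hv1 : ((1 : Fin (2 * k + 1)) : ℕ) = 1 := by
    rw [Fin.val_one']; exact Nat.mod_eq_of_lt (by omega)
  have : (((1 : Fin (2 * k + 1)) + 1 : Fin (2 * k + 1)) : ℕ) = 2 := by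
    rw [Fin.val_add, hv1]
    exact Nat.mod_eq_of_lt (by omega)
  rw [hcon] at this
  simp at this

lemma adjsum (k : ℕ) (hk : 1 ≤ k) (u : Fin (2 * k + 1) → ℝ) (y : Fin (2 * k + 1)) :
    ∑ z, u z * (SimpleGraph.cycleGraph (2 * k + 1)).adjMatrix ℝ z y
      = u (y + 1) + u (y - 1) := by
  haveI : NeZero (2 * k + 1) := ⟨by omega⟩
  have hv1 : ((1 : Fin (2 * k + 1)) : ℕ) = 1 := by
    rw [Fin.val_one']; exact Nat.mod_eq_of_lt (by omega)
  have hne : y + 1 ≠ y - 1 := by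
    intro hcon
    apply two_ne_zero_fin k hk
    have : y + (1 + 1) = y + 0 := by
      rw [add_zero, ← add_assoc, hcon]
      abel
    exact add_left_cancel this
  have hadj : ∀ z, (SimpleGraph.cycleGraph (2 * k + 1)).Adj z y ↔ (z = y + 1 ∨ z = y - 1) := by
    intro z
    rw [SimpleGraph.cycleGraph_adj']
    have efin : ∀ a b : Fin (2 * k + 1), (((a - b : Fin (2 * k + 1))) : ℕ) = 1 ↔ a - b = 1 := by
      intro a b
      constructor
      · intro hval
        exact Fin.ext (hval.trans hv1.symm)
      · intro heq
        rw [heq, hv1]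
    have e1 : ((z - y : Fin (2 * k + 1)) : ℕ) = 1 ↔ z = y + 1 := by
      rw [efin, sub_eq_iff_eq_add']
    have e2 : ((y - z : Fin (2 * k + 1)) : ℕ) = 1 ↔ z = y - 1 := by
      rw [efin, sub_eq_iff_eq_add', eq_sub_iff_add_eq]
      exact eq_comm
    rw [e1, e2]
  calc ∑ z, u z * (SimpleGraph.cycleGraph (2 * k + 1)).adjMatrix ℝ z y
      = ∑ z, ((if z = y + 1 then u z else 0) + (if z = y - 1 then u z else 0)) := by
        refine Finset.sum_congr rfl fun z _ => ?_
        rw [SimpleGraph.adjMatrix_apply]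
        simp only [hadj z]
        by_cases h1 : z = y + 1 <;> by_cases h2 : z = y - 1 <;>
          simp_all [hne]
    _ = u (y + 1) + u (y - 1) := by
        rw [Finset.sum_add_distrib, Finset.sum_ite_eq', Finset.sum_ite_eq']
        simp

/-- The candidate satisfies the recurrence. -/
lemma gq_rec (k : ℕ) (hk : 1 ≤ k) (z : Fin (2 * k + 1)) :
    gq k (z.val : ℝ)
        - (gq k (((z + 1 : Fin (2 * k + 1)) : ℕ) : ℝ)
            + gq k (((z - 1 : Fin (2 * k + 1)) : ℕ) : ℝ)) / 2
      = (if z = 0 then (1 : ℝ) else 0) - 2 / (2 * (2 * (k : ℝ) + 1)) := by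
  haveI : NeZero (2 * k + 1) := ⟨by omega⟩
  by_cases hz0 : z = 0
  · subst hz0
    have hlast : (0 : Fin (2 * k + 1)) ≠ Fin.last (2 * k) := by
      intro hcon
      have := congrArg Fin.val hcon
      rw [Fin.val_zero, Fin.val_last] at this
      omega
    have hv1 : (((0 : Fin (2 * k + 1)) + 1 : Fin (2 * k + 1)) : ℕ) = 1 := by
      rw [Fin.val_add_one, if_neg hlast]; simp
    have hv2 : (((0 : Fin (2 * k + 1)) - 1 : Fin (2 * k + 1)) : ℕ) = 2 * k := by
      rw [Fin.coe_sub_one, if_pos rfl]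
    rw [hv1, hv2]
    have h2k : gq k (((2 * k : ℕ) : ℝ)) = gq k 1 := by
      rw [show (((2 * k : ℕ) : ℝ)) = 2 * (k : ℝ) + 1 - 1 by push_cast; ring, gq_symm]
    rw [h2k, if_pos rfl]
    simp only [Fin.val_zero, Nat.cast_zero, Nat.cast_one]
    linarith [gq_zero k]
  · have hvz : 1 ≤ z.val := by
      rcases Nat.eq_zero_or_pos z.val with h | h
      · exact absurd (Fin.ext h) hz0
      · exact h
    have hsub : (((z - 1 : Fin (2 * k + 1)) : ℕ) : ℝ) = (z.val : ℝ) - 1 := by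
      rw [Fin.coe_sub_one, if_neg hz0]
      push_cast [hvz]
      ring
    have hadd : gq k (((z + 1 : Fin (2 * k + 1)) : ℕ) : ℝ) = gq k ((z.val : ℝ) + 1) := by
      by_cases hl : z = Fin.last (2 * k)
      · rw [Fin.val_add_one, if_pos hl]
        have hzv : z.val = 2 * k := by rw [hl, Fin.val_last]
        have : (z.val : ℝ) + 1 = 2 * (k : ℝ) + 1 - 0 := by
          rw [hzv]; push_cast; ring
        rw [this, gq_symm]
        norm_num
      · rw [Fin.val_add_one, if_neg hl]
        push_cast
        ring_nf
    rw [hsub, hadd, if_neg hz0, gq_lap]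
    ring

/-- The key identity: `gq` applied to `(x - y).val` equals `gq` applied to the cycle distance. -/
lemma gq_dist (k : ℕ) (hk : 1 ≤ k) (x y : Fin (2 * k + 1)) :
    gq k ((((x - y : Fin (2 * k + 1)) : ℕ)) : ℝ)
      = gq k ((cycleDist (2 * k + 1) x y : ℕ) : ℝ) := by
  have hsym : ∀ m : ℕ, m ≤ 2 * k + 1 →
      gq k (((2 * k + 1 - m : ℕ) : ℝ)) = gq k (m : ℝ) := by
    intro m hm
    have : (((2 * k + 1 - m : ℕ)) : ℝ) = 2 * (k : ℝ) + 1 - (m : ℝ) := by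
      push_cast [hm]
      ring
    rw [this, gq_symm]
  set t : ℕ := ((x : ℤ) - (y : ℤ)).natAbs with ht
  have hxn : x.val < 2 * k + 1 := x.isLt
  have hyn : y.val < 2 * k + 1 := y.isLt
  have htlt : t < 2 * k + 1 := by omega
  have hval : ((x - y : Fin (2 * k + 1)) : ℕ) = t ∨
      ((x - y : Fin (2 * k + 1)) : ℕ) = 2 * k + 1 - t := by
    rw [Fin.sub_def]
    rcases le_or_gt y.val x.val with h | h
    · left
      show (2 * k + 1 - y.val + x.val) % (2 * k + 1) = t
      have e : 2 * k + 1 - y.val + x.val = (x.val - y.val) + (2 * k + 1) := by omega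
      rw [e, Nat.add_mod_right, Nat.mod_eq_of_lt (by omega)]
      omega
    · right
      show (2 * k + 1 - y.val + x.val) % (2 * k + 1) = 2 * k + 1 - t
      rw [Nat.mod_eq_of_lt (by omega)]
      omega
  have hcd : cycleDist (2 * k + 1) x y = t ∨
      cycleDist (2 * k + 1) x y = 2 * k + 1 - t := by
    unfold cycleDist
    rcases le_total t (2 * k + 1 - t) with h | h
    · left; rw [← ht]; omega
    · right; rw [← ht]; omega
  have key : ∀ m : ℕ, (m = t ∨ m = 2 * k + 1 - t) → gq k (m : ℝ) = gq k (t : ℝ) := by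
    rintro m (rfl | rfl)
    · rfl
    · exact hsym t (by omega)
  rw [key _ hval, key _ hcd]

/-- For odd `n = 2k+1` with `k ≥ 1`, the Green's function of the cycle `C_n`
is `𝔾(x,y) = (2/(2k+1)) · C(k+1−|x−y|_c, 2) − (k²+k)/(3(2k+1))`, where
`C(m,2) = m(m−1)/2`. -/
theorem green_function_odd_cycle
    (k : ℕ) (hk : 1 ≤ k)
    -- the Green's function `𝔾` of `C_{2k+1}` (all degrees are `2`, `vol = 2·(2k+1)`)
    (𝔾 : Matrix (Fin (2 * k + 1)) (Fin (2 * k + 1)) ℝ)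
    (hG1 : ∀ x y : Fin (2 * k + 1),
      (𝔾 * (1 - ((Matrix.diagonal fun _ => (2 : ℝ)⁻¹ :
              Matrix (Fin (2 * k + 1)) (Fin (2 * k + 1)) ℝ))
          * (SimpleGraph.cycleGraph (2 * k + 1)).adjMatrix ℝ)) x y
        = (if x = y then (1 : ℝ) else 0) - 2 / (2 * (2 * (k : ℝ) + 1)))
    (hG2 : ∀ x : Fin (2 * k + 1), ∑ y, 𝔾 x y = 0) :
    ∀ x y : Fin (2 * k + 1),
      𝔾 x y = (2 / (2 * (k : ℝ) + 1))
          * (((k : ℝ) + 1 - (cycleDist (2 * k + 1) x y : ℝ))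
              * (((k : ℝ) + 1 - (cycleDist (2 * k + 1) x y : ℝ)) - 1) / 2)
        - ((k : ℝ) ^ 2 + (k : ℝ)) / (3 * (2 * (k : ℝ) + 1)) := by
  haveI : NeZero (2 * k + 1) := ⟨by omega⟩
  intro x y
  -- rewrite the matrix equation into a pointwise recurrence for row `x`
  have hrow : ∀ w : Fin (2 * k + 1),
      𝔾 x w - (𝔾 x (w + 1) + 𝔾 x (w - 1)) / 2
        = (if x = w then (1 : ℝ) else 0) - 2 / (2 * (2 * (k : ℝ) + 1)) := by
    intro w
    have h := hG1 x w
    rw [Matrix.mul_sub, Matrix.mul_one, Matrix.sub_apply, Matrix.mul_apply] at h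
    have hterm : ∀ z, 𝔾 x z * (((Matrix.diagonal fun _ => (2 : ℝ)⁻¹ :
          Matrix (Fin (2 * k + 1)) (Fin (2 * k + 1)) ℝ)) *
        (SimpleGraph.cycleGraph (2 * k + 1)).adjMatrix ℝ) z w
        = (𝔾 x z * (SimpleGraph.cycleGraph (2 * k + 1)).adjMatrix ℝ z w) / 2 := by
      intro z
      rw [Matrix.diagonal_mul]
      ring
    rw [Finset.sum_congr rfl (fun z _ => hterm z), ← Finset.sum_div,
      adjsum k hk (fun z => 𝔾 x z) w] at h
    exact h
  -- the candidate row
  set F : Fin (2 * k + 1) → ℝ := fun w => gq k ((((x - w : Fin (2 * k + 1)) : ℕ)) : ℝ) with hF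
  have hFrow : ∀ w : Fin (2 * k + 1),
      F w - (F (w + 1) + F (w - 1)) / 2
        = (if x = w then (1 : ℝ) else 0) - 2 / (2 * (2 * (k : ℝ) + 1)) := by
    intro w
    have e1 : x - (w + 1) = (x - w) - 1 := by abel
    have e2 : x - (w - 1) = (x - w) + 1 := by abel
    have e3 : (x = w) ↔ ((x - w : Fin (2 * k + 1)) = 0) := by
      constructor
      · intro h; rw [h, sub_self]
      · intro h; have := sub_eq_zero.mp h; exact this
    simp only [hF, e1, e2]
    have hr := gq_rec k hk (x - w)
    by_cases hxw : x = w
    · rw [if_pos (e3.mp hxw)] at hr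
      rw [if_pos hxw]
      linarith
    · rw [if_neg (fun hh => hxw (e3.mpr hh))] at hr
      rw [if_neg hxw]
      linarith
  have hFsum : ∑ w, F w = 0 := by
    have : ∑ w : Fin (2 * k + 1), F w = ∑ z : Fin (2 * k + 1), gq k ((z : ℕ) : ℝ) := by
      refine Fintype.sum_equiv (Equiv.subLeft x) _ _ (fun w => rfl)
    rw [this, gq_sum]
  -- difference is harmonic with zero sum, hence zero
  have hdiff : ∀ w, 𝔾 x w - F w = 0 := by
    apply myHarmonicZero (2 * k + 1) (by omega)
    · intro w
      have h1 := hrow w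
      have h2 := hFrow w
      have h3 := hrow (w + 1)
      linarith [hrow w, hFrow w]
    · rw [Finset.sum_sub_distrib, hG2 x, hFsum, sub_self]
  have hGF : 𝔾 x y = F y := by
    have := hdiff y
    linarith
  rw [hGF]
  have : F y = gq k ((cycleDist (2 * k + 1) x y : ℕ) : ℝ) := gq_dist k hk x y
  rw [this]
  unfold gq
  ring
end

section
/- Let n = 2k be even with k ≥ 2, and let 𝔾 be the Green's function of the cycle C_n. Then for every vertex j, 𝔾(1,j) − 𝔾(1+k,j) = k/2 − |j−1|_c, where |j−1|_c denotes the graph distance between j and 1 in C_n. -/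
open SimpleGraph Finset Fin.NatCast Fin.CommRing

private lemma two_block_mod {N a : ℕ} (h : a < 2 * N) :
    a % N = if a < N then a else a - N := by
  split_ifs with h1
  · exact Nat.mod_eq_of_lt h1
  · rw [Nat.mod_eq_sub_mod (le_of_not_gt h1), Nat.mod_eq_of_lt (by omega)]

/-- A function on `Fin n` whose discrete second difference vanishes everywhere and whose
sum is zero is identically zero. -/
private lemma harm_zero {n : ℕ} [NeZero n] (h : Fin n → ℝ)
    (H : ∀ y, h (y + 1) - h y = h y - h (y - 1))
    (Hsum : ∑ y, h y = 0) : ∀ y, h y = 0 := by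
  have hn : (n : ℝ) ≠ 0 := Nat.cast_ne_zero.mpr (NeZero.ne n)
  have step : ∀ y : Fin n, h (y + 1 + 1) - h (y + 1) = h (y + 1) - h y := by
    intro y
    have := H (y + 1)
    rwa [add_sub_cancel_right] at this
  have e_nat : ∀ m : ℕ, h ((m : Fin n) + 1) - h (m : Fin n) = h 1 - h 0 := by
    intro m
    induction m with
    | zero => norm_num
    | succ m ih =>
      push_cast
      rw [step]
      exact ih
  have e_const : ∀ y : Fin n, h (y + 1) - h y = h 1 - h 0 := fun y => by
    simpa [Fin.cast_val_eq_self] using e_nat y.val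
  have sum_shift : ∑ y : Fin n, h (y + 1) = ∑ y : Fin n, h y :=
    Fintype.sum_equiv (Equiv.addRight 1) _ _ (fun y => rfl)
  have sum_e : ∑ y : Fin n, (h (y + 1) - h y) = 0 := by
    rw [Finset.sum_sub_distrib, sum_shift, sub_self]
  have card0 : (n : ℝ) * (h 1 - h 0) = 0 := by
    rw [Finset.sum_congr rfl (fun y _ => e_const y)] at sum_e
    rw [Finset.sum_const, Finset.card_univ, Fintype.card_fin, nsmul_eq_mul] at sum_e
    exact sum_e
  have h10 : h 1 - h 0 = 0 := by
    rcases mul_eq_zero.mp card0 with h' | h'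
    · exact absurd h' hn
    · exact h'
  have hstep : ∀ y : Fin n, h (y + 1) = h y := fun y => by
    have := e_const y; rw [h10] at this; linarith
  have hconst_nat : ∀ m : ℕ, h (m : Fin n) = h 0 := by
    intro m
    induction m with
    | zero => norm_num
    | succ m ih =>
      push_cast
      rw [hstep]
      exact ih
  have hconst : ∀ y : Fin n, h y = h 0 := fun y => by
    simpa [Fin.cast_val_eq_self] using hconst_nat y.val
  have h0 : (n : ℝ) * h 0 = 0 := by
    rw [Finset.sum_congr rfl (fun y _ => hconst y)] at Hsum
    simpa [Finset.sum_const, Finset.card_univ, nsmul_eq_mul] using Hsum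
  have h00 : h 0 = 0 := by
    rcases mul_eq_zero.mp h0 with h' | h'
    · exact absurd h' hn
    · exact h'
  intro y
  rw [hconst y, h00]

private lemma sum_min_two_mul (k : ℕ) (hk : 2 ≤ k) :
    ∑ y : Fin (2 * k), min y.val (2 * k - y.val) = k * k := by
  haveI : NeZero (2 * k) := ⟨by omega⟩
  have hkv : ((k : Fin (2 * k)) : ℕ) = k := by
    rw [Fin.val_natCast]; exact Nat.mod_eq_of_lt (by omega)
  have pair : ∀ y : Fin (2 * k),
      min y.val (2 * k - y.val)
        + min ((y + (k : Fin (2 * k))).val) (2 * k - (y + (k : Fin (2 * k))).val) = k := by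
    intro y
    have hy := y.isLt
    have hval : ((y + (k : Fin (2 * k))).val) = (y.val + k) % (2 * k) := by
      rw [Fin.val_add, hkv]
    rw [hval, two_block_mod (by omega)]
    split_ifs <;> omega
  have shift :
      ∑ y : Fin (2 * k), min ((y + (k : Fin (2 * k))).val) (2 * k - (y + (k : Fin (2 * k))).val)
        = ∑ y : Fin (2 * k), min y.val (2 * k - y.val) :=
    Fintype.sum_equiv (Equiv.addRight _) _ _ (fun y => rfl)
  have tot : (∑ y : Fin (2 * k), min y.val (2 * k - y.val))
      + (∑ y : Fin (2 * k),
          min ((y + (k : Fin (2 * k))).val) (2 * k - (y + (k : Fin (2 * k))).val)) = 2 * (k * k) := by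
    rw [← Finset.sum_add_distrib, Finset.sum_congr rfl (fun y _ => pair y),
      Finset.sum_const, Finset.card_univ]
    simp only [Fintype.card_fin, smul_eq_mul]
    ring
  rw [shift] at tot
  omega

/-- For even `n = 2k` with `k ≥ 2` and the Green's function `𝔾` of the cycle
`C_n` (vertices `1,…,n`, here `0`-indexed): for every vertex `j`,
`𝔾(1,j) − 𝔾(1+k,j) = k/2 − |j−1|_c`. -/
theorem green_function_even_cycle_antipodal_difference
    (k : ℕ) (hk : 2 ≤ k)
    -- the Green's function `𝔾` of `C_{2k}` (all degrees are `2`, `vol(C_{2k}) = 2·(2k)`)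
    (𝔾 : Matrix (Fin (2 * k)) (Fin (2 * k)) ℝ)
    (hG1 : ∀ x y : Fin (2 * k),
      (𝔾 * (1 - ((Matrix.diagonal fun _ => (2 : ℝ)⁻¹ : Matrix (Fin (2 * k)) (Fin (2 * k)) ℝ))
          * (SimpleGraph.cycleGraph (2 * k)).adjMatrix ℝ)) x y
        = (if x = y then (1 : ℝ) else 0) - 2 / (2 * (2 * (k : ℝ))))
    (hG2 : ∀ x : Fin (2 * k), ∑ y, 𝔾 x y = 0) :
    ∀ j : Fin (2 * k),
      𝔾 (⟨0, by omega⟩ : Fin (2 * k)) j - 𝔾 (⟨k, by omega⟩ : Fin (2 * k)) j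
        = (k : ℝ) / 2 - (cycleDist (2 * k) j (⟨0, by omega⟩ : Fin (2 * k)) : ℝ) := by

  have hn : 4 ≤ 2 * k := by omega
  haveI : NeZero (2 * k) := ⟨by omega⟩
  -- basic Fin facts
  have hv1 : ((1 : Fin (2 * k)) : ℕ) = 1 := by
    simp [Fin.val_one', Nat.mod_eq_of_lt (by omega : 1 < 2 * k)]
  have adj_iff : ∀ z y : Fin (2 * k), (cycleGraph (2 * k)).Adj z y ↔ z = y - 1 ∨ z = y + 1 := by
    intro z y
    rw [cycleGraph_adj']
    constructor
    · rintro (h | h)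
      · right
        have : z - y = 1 := Fin.ext (by rw [h, hv1])
        rw [← this]; ring
      · left
        have : y - z = 1 := Fin.ext (by rw [h, hv1])
        rw [eq_sub_iff_add_eq, ← this]; ring
    · rintro (rfl | rfl)
      · right; rw [show y - (y - 1) = 1 by ring, hv1]
      · left; rw [show y + 1 - y = 1 by ring, hv1]
  have hv2 : ((2 : Fin (2 * k)) : ℕ) = 2 := by
    rw [show (2 : Fin (2 * k)) = 1 + 1 by norm_num, Fin.val_add, hv1]
    exact Nat.mod_eq_of_lt (by omega)
  have hone : (1 : Fin (2 * k)) ≠ 0 := by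
    intro h; have := congrArg Fin.val h; rw [hv1] at this; simp at this
  have hne : ∀ y : Fin (2 * k), y - 1 ≠ y + 1 := by
    intro y hEq
    have h2 : (2 : Fin (2 * k)) = 0 := by
      calc (2 : Fin (2 * k)) = (y + 1) - (y - 1) := by ring
        _ = 0 := by rw [hEq, sub_self]
    have := congrArg Fin.val h2
    rw [hv2] at this; simp at this
  have hym : ∀ y : Fin (2 * k), y - 1 ≠ y := by
    intro y h
    have := congrArg (· + 1 - y) h
    simp only [sub_add_cancel] at this
    exact hone (by rw [show (1 : Fin (2 * k)) = y + 1 - y by ring, ← this]; ring)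
  have hyp : ∀ y : Fin (2 * k), y + 1 ≠ y := by
    intro y h
    have := congrArg (· - y) h
    simp only [add_sub_cancel_left, sub_self] at this
    exact hone this
  -- the Laplacian identity for any row x of 𝔾
  have expand : ∀ x y : Fin (2 * k),
      𝔾 x y - 2⁻¹ * (𝔾 x (y - 1) + 𝔾 x (y + 1))
        = (if x = y then (1 : ℝ) else 0) - 2 / (2 * (2 * (k : ℝ))) := by
    intro x y
    rw [← hG1 x y, Matrix.mul_apply]
    have hterm : ∀ z : Fin (2 * k),
        𝔾 x z * ((1 - ((Matrix.diagonal fun _ => (2 : ℝ)⁻¹ : Matrix (Fin (2 * k)) (Fin (2 * k)) ℝ))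
          * (cycleGraph (2 * k)).adjMatrix ℝ) z y)
        = (if z = y then 𝔾 x z else 0)
          - 2⁻¹ * ((if z = y - 1 then 𝔾 x z else 0) + (if z = y + 1 then 𝔾 x z else 0)) := by
      intro z
      rw [Matrix.sub_apply, Matrix.one_apply, Matrix.diagonal_mul, adjMatrix_apply]
      by_cases h1 : z = y - 1
      · subst h1
        rw [if_neg (hym y), if_pos ((adj_iff _ _).mpr (Or.inl rfl)), if_pos rfl,
          if_neg (hne y), if_neg (hym y)]
        ring
      by_cases h2 : z = y + 1
      · subst h2
        rw [if_neg (hyp y), if_pos ((adj_iff _ _).mpr (Or.inr rfl)), if_neg (Ne.symm (hne y)),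
          if_pos rfl, if_neg (hyp y)]
        ring
      have hAdj : ¬ (cycleGraph (2 * k)).Adj z y := fun hA => by
        rcases (adj_iff z y).mp hA with h | h
        exacts [h1 h, h2 h]
      rw [if_neg hAdj, if_neg h1, if_neg h2]
      by_cases h0 : z = y
      · rw [if_pos h0, if_pos h0]; ring
      · rw [if_neg h0, if_neg h0]; ring
    rw [Fintype.sum_congr _ _ hterm, Finset.sum_sub_distrib, ← Finset.mul_sum,
      Finset.sum_add_distrib, Finset.sum_ite_eq' univ, Finset.sum_ite_eq' univ,
      Finset.sum_ite_eq' univ]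
    simp only [Finset.mem_univ, if_true]
  intro j
  let z0 : Fin (2 * k) := ⟨0, by omega⟩
  let zk : Fin (2 * k) := ⟨k, by omega⟩
  have hz0v : (z0 : ℕ) = 0 := rfl
  have hzkv : (zk : ℕ) = k := rfl
  -- the function h = g - f
  let F : Fin (2 * k) → ℝ := fun y =>
    𝔾 z0 y - 𝔾 zk y - ((k : ℝ) / 2 - (min y.val (2 * k - y.val) : ℝ))
  have hharm : ∀ y : Fin (2 * k), F (y + 1) - F y = F y - F (y - 1) := by
    intro y
    have hy := y.isLt
    have e1 := expand z0 y
    have e2 := expand zk y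
    have hiz0 : ∀ r s : ℝ, (if z0 = y then r else s) = if y.val = 0 then r else s := by
      intro r s; congr 1
      rw [Fin.ext_iff, hz0v]; exact propext ⟨fun h => h.symm, fun h => h.symm⟩
    have hizk : ∀ r s : ℝ, (if zk = y then r else s) = if y.val = k then r else s := by
      intro r s; congr 1
      rw [Fin.ext_iff, hzkv]; exact propext ⟨fun h => h.symm, fun h => h.symm⟩
    rw [hiz0] at e1
    rw [hizk] at e2
    have hs : ((y - 1 : Fin (2 * k)) : ℕ)
        = if (2 * k - 1) + y.val < 2 * k then (2 * k - 1) + y.val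
          else (2 * k - 1) + y.val - 2 * k := by
      rw [Fin.sub_def]
      show ((2 * k - ((1 : Fin (2 * k)).val)) + y.val) % (2 * k) = _
      rw [hv1, two_block_mod (by omega)]
    have ha : ((y + 1 : Fin (2 * k)) : ℕ)
        = if y.val + 1 < 2 * k then y.val + 1 else y.val + 1 - 2 * k := by
      rw [Fin.val_add, hv1, two_block_mod (by omega)]
    have minZ : ((min (y - 1 : Fin (2 * k)).val (2 * k - (y - 1 : Fin (2 * k)).val) : ℤ)
          + (min (y + 1 : Fin (2 * k)).val (2 * k - (y + 1 : Fin (2 * k)).val) : ℤ))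
          - 2 * (min y.val (2 * k - y.val) : ℤ)
        = (if y.val = 0 then 2 else 0) - (if y.val = k then 2 else 0) := by
      rw [hs, ha]
      split_ifs <;> push_cast <;> omega
    have minR : ((min (y - 1 : Fin (2 * k)).val (2 * k - (y - 1 : Fin (2 * k)).val) : ℝ)
          + (min (y + 1 : Fin (2 * k)).val (2 * k - (y + 1 : Fin (2 * k)).val) : ℝ))
          - 2 * (min y.val (2 * k - y.val) : ℝ)
        = (if y.val = 0 then 2 else 0) - (if y.val = k then 2 else 0) := by
      have := congrArg (fun z : ℤ => (z : ℝ)) minZ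
      push_cast at this
      rw [this]
    simp only [F]
    by_cases c0 : y.val = 0
    · have ck : y.val ≠ k := by omega
      rw [if_pos c0] at e1 minR
      rw [if_neg ck] at e2 minR
      linarith
    · by_cases ck : y.val = k
      · rw [if_neg c0] at e1 minR
        rw [if_pos ck] at e2 minR
        linarith
      · rw [if_neg c0] at e1 minR
        rw [if_neg ck] at e2 minR
        linarith
  have bridge : ∀ y : Fin (2 * k),
      ((min y.val (2 * k - y.val) : ℕ) : ℝ) = (min y.val (2 * k - y.val) : ℝ) := by
    intro y
    rw [Nat.cast_min, Nat.cast_sub (by omega : (y : ℕ) ≤ 2 * k)]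
    push_cast
    ring_nf
  have hsum : ∑ y, F y = 0 := by
    have hM : ∑ y : Fin (2 * k), (min y.val (2 * k - y.val) : ℝ) = ((k * k : ℕ) : ℝ) := by
      rw [Finset.sum_congr rfl (fun y _ => (bridge y).symm), ← Nat.cast_sum]
      exact_mod_cast congrArg (fun m : ℕ => (m : ℝ)) (sum_min_two_mul k hk)
    simp only [F]
    rw [Finset.sum_sub_distrib, Finset.sum_sub_distrib, Finset.sum_sub_distrib,
      hG2 z0, hG2 zk, hM]
    rw [Finset.sum_const, Finset.card_univ]
    simp only [Fintype.card_fin, nsmul_eq_mul]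
    push_cast
    ring
  have hzero := harm_zero F hharm hsum j
  have hcd : (cycleDist (2 * k) j z0 : ℕ) = min j.val (2 * k - j.val) := by
    simp [cycleDist, hz0v]
  show 𝔾 z0 j - 𝔾 zk j = (k : ℝ) / 2 - (cycleDist (2 * k) j z0 : ℝ)
  rw [hcd, bridge j]
  simp only [F] at hzero
  linarith
end

section
/- Let Q_n be the hypercube graph on the binary strings of length n, let 𝔾 be its Green's function, let 𝟎 be the all-zero string and 𝟏 the all-one string, and let x be a vertex at Hamming distance k from 𝟎. Then 𝔾(𝟎,x) − 𝔾(𝟏,x) = 2^{−n} Σ_{j=k}^{n−k−1} (C(n,j+1) + C(n,j+2) + … + C(n,n)) / C(n−1,j), with the convention that Σ_{j=b}^{a} c_j = −Σ_{j=a}^{b} c_j when b > a. -/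
/-- The hypercube graph `Q_n`: vertices are binary strings of length `n`, with edges joining
pairs of strings differing in exactly one coordinate. -/
def hypercubeGraph (n : ℕ) : SimpleGraph (Fin n → Bool) where
  Adj x y := hammingDist x y = 1
  symm := ⟨fun x y (h : hammingDist x y = 1) => show hammingDist y x = 1 by rwa [hammingDist_comm]⟩
  loopless := ⟨fun x h => by simp only [hammingDist_self] at h; exact absurd h (by omega)⟩

instance hypercubeGraphAdjDecidable (n : ℕ) : DecidableRel (hypercubeGraph n).Adj :=
  fun x y => inferInstanceAs (Decidable (hammingDist x y = 1))

open Finset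

noncomputable def Tf (n j : ℕ) : ℝ :=
  (∑ i ∈ Finset.Icc (j+1) n, (n.choose i : ℝ)) / ((n-1).choose j : ℝ)

noncomputable def Hs (n m : ℕ) : ℝ := ∑ j ∈ Finset.range m, Tf n j

noncomputable def Ff (n k : ℕ) : ℝ := Hs n (n - k) - Hs n k

lemma Bsplit (n j : ℕ) (hj : j ≤ n) :
    (∑ i ∈ Finset.range (j+1), (n.choose i : ℕ)) + ∑ i ∈ Finset.Icc (j+1) n, n.choose i
      = 2 ^ n := by
  rw [Finset.range_eq_Ico, ← Finset.Ico_add_one_right_eq_Icc,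
    Finset.sum_Ico_consecutive _ (Nat.zero_le _) (by omega),
    ← Finset.range_eq_Ico, Nat.sum_range_choose]

lemma Brefl (n j : ℕ) (hj : j + 1 ≤ n) :
    ∑ i ∈ Finset.Icc (n-j) n, (n.choose i : ℕ) = ∑ i ∈ Finset.range (j+1), n.choose i := by
  rw [Finset.range_eq_Ico, ← Finset.Ico_add_one_right_eq_Icc]
  refine Finset.sum_nbij' (fun i => n - i) (fun i => n - i) ?_ ?_ ?_ ?_ ?_
  · intro a ha; simp only [Finset.mem_Ico, Finset.mem_Icc] at *; omega
  · intro a ha; simp only [Finset.mem_Ico, Finset.mem_Icc] at *; omega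
  · intro a ha; simp only [Finset.mem_Ico, Finset.mem_Icc] at *; omega
  · intro a ha; simp only [Finset.mem_Ico, Finset.mem_Icc] at *; omega
  · intro a ha; simp only [Finset.mem_Ico, Finset.mem_Icc] at ha
    exact (Nat.choose_symm (by omega : a ≤ n)).symm

lemma Tsym (n j : ℕ) (hn : 1 ≤ n) (hj : j ≤ n - 1) :
    Tf n j + Tf n (n-1-j) = 2^n / ((n-1).choose j : ℝ) := by
  unfold Tf
  rw [Nat.choose_symm (by omega : j ≤ n - 1), ← add_div]
  congr 1
  have h1 : n - 1 - j + 1 = n - j := by omega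
  rw [h1]
  have h2 := Brefl n j (by omega)
  have h3 := Bsplit n j (by omega)
  have h4 : (∑ i ∈ Finset.Icc (j+1) n, (n.choose i : ℕ))
      + ∑ i ∈ Finset.Icc (n-j) n, n.choose i = 2^n := by omega
  exact_mod_cast h4

lemma Hs_succ (n m : ℕ) : Hs n (m+1) = Hs n m + Tf n m := Finset.sum_range_succ _ _

lemma Hs_zero (n : ℕ) : Hs n 0 = 0 := Finset.sum_range_zero _

lemma Fneg (n k : ℕ) (hk : k ≤ n) : Ff n (n - k) = -Ff n k := by
  unfold Ff
  rw [show n - (n - k) = k by omega]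
  ring

lemma Fval (n k : ℕ) :
    (∑ j ∈ Finset.Ico k (n - k), Tf n j) - ∑ j ∈ Finset.Ico (n - k) k, Tf n j = Ff n k := by
  unfold Ff Hs
  rcases le_total k (n - k) with h | h
  · rw [Finset.sum_Ico_eq_sub _ h, Finset.Ico_eq_empty (by omega), Finset.sum_empty]
    ring
  · rw [Finset.sum_Ico_eq_sub _ h, Finset.Ico_eq_empty (by omega), Finset.sum_empty]
    ring

lemma choose_cross (n k : ℕ) (hk1 : 1 ≤ k) (hk2 : k ≤ n - 1) :
    k * (n-1).choose k = (n - k) * (n-1).choose (k-1) := by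
  have h := Nat.choose_succ_right_eq (n-1) (k-1)
  rw [show k - 1 + 1 = k by omega] at h
  rw [show n - 1 - (k - 1) = n - k by omega] at h
  rw [mul_comm, h, mul_comm]

lemma Frec (n k : ℕ) (hn : 1 ≤ n) (hk : k ≤ n) :
    (n:ℝ) * Ff n k - (k:ℝ) * Ff n (k-1) - ((n:ℝ) - (k:ℝ)) * Ff n (k+1)
      = if k = 0 then (n:ℝ) * 2^n else if k = n then -((n:ℝ) * 2^n) else 0 := by
  have key0 : Tf n 0 + Tf n (n-1) = 2^n := by
    have h := Tsym n 0 hn (Nat.zero_le _)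
    simpa using h
  rcases eq_or_ne k 0 with rfl | hk0
  · rw [if_pos rfl]
    unfold Ff
    rw [show (0:ℕ) - 1 = 0 from rfl, show n - 0 = (n-1) + 1 by omega, Hs_succ,
      show (0:ℕ) + 1 = 1 from rfl, show n - 1 = n - 1 from rfl]
    rw [show Hs n 1 = Hs n (0 + 1) from rfl, Hs_succ, Hs_zero]
    push_cast
    linear_combination (n:ℝ) * key0
  rcases eq_or_ne k n with rfl | hkn
  · rw [if_neg hk0, if_pos rfl]
    unfold Ff
    have eH := Hs_succ k (k-1)
    rw [show k-1+1 = k by omega] at eH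
    have e1 : Hs k 1 = Hs k 0 + Tf k 0 := by simpa using Hs_succ k 0
    rw [show k - k = 0 by omega, show k - (k-1) = 1 by omega, eH, e1, Hs_zero]
    push_cast
    linear_combination -(k:ℝ) * key0
  · rw [if_neg hk0, if_neg hkn]
    have hk1 : 1 ≤ k := by omega
    have hk2 : k ≤ n - 1 := by omega
    set m := n - k with hm
    have hm1 : 1 ≤ m := by omega
    have key1 : Tf n k + Tf n (m-1) = 2^n / ((n-1).choose k : ℝ) := by
      have h := Tsym n k hn hk2
      rw [show n - 1 - k = m - 1 by omega] at h
      exact h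
    have key2 : Tf n (k-1) + Tf n m = 2^n / ((n-1).choose (k-1) : ℝ) := by
      have h := Tsym n (k-1) hn (by omega)
      rw [show n - 1 - (k-1) = m by omega] at h
      exact h
    have hc1 : ((n-1).choose k : ℝ) ≠ 0 := by
      exact_mod_cast (Nat.choose_pos (by omega : k ≤ n - 1)).ne'
    have hc2 : ((n-1).choose (k-1) : ℝ) ≠ 0 := by
      exact_mod_cast (Nat.choose_pos (by omega : k - 1 ≤ n - 1)).ne'
    have crossR : (k:ℝ) * ((n-1).choose k : ℝ) = (m:ℝ) * ((n-1).choose (k-1) : ℝ) := by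
      have h := choose_cross n k hk1 hk2
      exact_mod_cast h
    have key3 : (m:ℝ) * (2^n / ((n-1).choose k : ℝ))
        = (k:ℝ) * (2^n / ((n-1).choose (k-1) : ℝ)) := by
      rw [mul_div_assoc', mul_div_assoc', div_eq_div_iff hc1 hc2]
      linear_combination (-(2:ℝ)^n) * crossR
    have hnm : ((n:ℕ):ℝ) = (k:ℝ) + (m:ℝ) := by
      have h : k + m = n := by omega
      exact_mod_cast h.symm
    have eHk := Hs_succ n (k-1)
    rw [show k-1+1 = k by omega] at eHk
    have eHm := Hs_succ n (m-1)
    rw [show m-1+1 = m by omega] at eHm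
    have eHm1 := Hs_succ n m
    have eHk1 := Hs_succ n k
    unfold Ff
    rw [show n - (k-1) = m+1 by omega, show n - k = m by omega,
      show n - (k+1) = m-1 by omega]
    rw [eHm1, eHk1, eHm, eHk, hnm]
    linear_combination (m:ℝ) * key1 - (k:ℝ) * key2 + key3
open Finset

def flipv {n : ℕ} (y : Fin n → Bool) (i : Fin n) : Fin n → Bool :=
  Function.update y i (!y i)

def wt {n : ℕ} (y : Fin n → Bool) : ℕ := hammingDist y (fun _ => false)

lemma wt_eq {n : ℕ} (y : Fin n → Bool) :
    wt y = (Finset.univ.filter fun i => y i = true).card := by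
  unfold wt hammingDist
  congr 1
  ext i
  simp

lemma wt_le {n : ℕ} (y : Fin n → Bool) : wt y ≤ n := by
  rw [wt_eq]
  have h := Finset.card_filter_le (Finset.univ : Finset (Fin n)) (fun i => y i = true)
  simpa using h

lemma flipv_flipv {n : ℕ} (y : Fin n → Bool) (i : Fin n) : flipv (flipv y i) i = y := by
  unfold flipv
  rw [Function.update_self, Function.update_idem, Bool.not_not, Function.update_eq_self]

lemma flipv_equiv_aux {n : ℕ} (i : Fin n) : Function.Bijective (fun y => flipv y i) :=
  Function.bijective_iff_has_inverse.2 ⟨fun y => flipv y i,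
    fun y => flipv_flipv y i, fun y => flipv_flipv y i⟩

lemma hamming_flipv {n : ℕ} (y : Fin n → Bool) (i : Fin n) :
    hammingDist (flipv y i) y = 1 := by
  unfold hammingDist
  rw [show ({j | flipv y i j ≠ y j} : Finset (Fin n)) = {i} from ?_, Finset.card_singleton]
  ext j
  rcases eq_or_ne j i with rfl | hji
  · rw [Finset.mem_filter]; simp [flipv, Function.update_self]
  · rw [Finset.mem_filter]; simp [flipv, Function.update_of_ne hji, hji]

lemma eq_flipv_of_dist_one {n : ℕ} {z y : Fin n → Bool} (h : hammingDist z y = 1) :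
    ∃ i, z = flipv y i := by
  unfold hammingDist at h
  rw [Finset.card_eq_one] at h
  obtain ⟨i, hi⟩ := h
  refine ⟨i, funext fun j => ?_⟩
  rcases eq_or_ne j i with rfl | hji
  · have : j ∈ ({j' | z j' ≠ y j'} : Finset (Fin n)) := hi ▸ Finset.mem_singleton_self j
    simp only [Finset.mem_filter] at this
    have h2 : z j ≠ y j := by simpa using this
    simp only [flipv, Function.update_self]
    revert h2; cases z j <;> cases y j <;> simp
  · have : j ∉ ({j' | z j' ≠ y j'} : Finset (Fin n)) := by
      rw [hi]; simpa using hji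
    simp only [Finset.mem_filter, Finset.mem_univ, true_and, not_not] at this
    have h2 : z j = y j := by simpa using this
    rw [flipv, Function.update_of_ne hji, h2]

lemma sum_neighbors {n : ℕ} (y : Fin n → Bool) (ψ : (Fin n → Bool) → ℝ) :
    ∑ z, (if hammingDist z y = 1 then ψ z else 0) = ∑ i, ψ (flipv y i) := by
  rw [← Finset.sum_filter]
  have himg : Finset.univ.filter (fun z => hammingDist z y = 1)
      = Finset.univ.image (fun i => flipv y i) := by
    ext z
    simp only [Finset.mem_filter, Finset.mem_univ, true_and, Finset.mem_image]
    constructor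
    · intro h; obtain ⟨i, hi⟩ := eq_flipv_of_dist_one h; exact ⟨i, hi.symm⟩
    · rintro ⟨i, rfl⟩; exact hamming_flipv y i
  rw [himg, Finset.sum_image]
  intro i _ j _ hij
  by_contra hne
  have h1 := congrFun hij i
  simp only [flipv] at h1
  rw [Function.update_self, Function.update_of_ne (Ne.symm ?_)] at h1
  · exact (Bool.not_ne_self (y i)) h1
  · exact fun h => hne (h ▸ rfl)

lemma wt_flipv {n : ℕ} (y : Fin n → Bool) (i : Fin n) :
    wt (flipv y i) = if y i = true then wt y - 1 else wt y + 1 := by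
  rw [wt_eq, wt_eq]
  rcases hyi : y i with hv | hv
  · -- y i = false : insert
    rw [if_neg (by simp [hyi])]
    have : (Finset.univ.filter fun j => flipv y i j = true)
        = insert i (Finset.univ.filter fun j => y j = true) := by
      ext j
      rcases eq_or_ne j i with rfl | hji
      · simp [flipv, Function.update_self, hyi]
      · rw [Finset.mem_filter]; simp [flipv, Function.update_of_ne hji, hji]
    rw [this, Finset.card_insert_of_notMem (by simp [hyi])]
  · -- y i = true : erase
    rw [if_pos rfl]
    have : (Finset.univ.filter fun j => flipv y i j = true)
        = (Finset.univ.filter fun j => y j = true).erase i := by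
      ext j
      rcases eq_or_ne j i with rfl | hji
      · simp [flipv, Function.update_self, hyi]
      · rw [Finset.mem_filter]; simp [flipv, Function.update_of_ne hji, hji]
    rw [this, Finset.card_erase_of_mem (by simp [hyi])]

lemma wt_comp {n : ℕ} (y : Fin n → Bool) : wt (fun i => !y i) = n - wt y := by
  rw [wt_eq, wt_eq]
  have h : (Finset.univ.filter fun i => (!y i) = true)
      = (Finset.univ.filter fun i => y i = true)ᶜ := by
    ext i; simp
  rw [h, Finset.card_compl]
  simp

lemma wt_n_iff {n : ℕ} (y : Fin n → Bool) : wt y = n ↔ y = (fun _ => true) := by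
  rw [wt_eq]
  constructor
  · intro h
    have hu : (Finset.univ.filter fun i => y i = true) = Finset.univ := by
      apply Finset.eq_univ_of_card
      simpa using h
    funext i
    have : i ∈ Finset.univ.filter fun i => y i = true := by
      rw [hu]; exact Finset.mem_univ i
    exact (Finset.mem_filter.1 this).2
  · rintro rfl
    simp

lemma sum_flipv_wt {n : ℕ} (y : Fin n → Bool) (φ : ℕ → ℝ) :
    ∑ i : Fin n, φ (wt (flipv y i))
      = (wt y : ℝ) * φ (wt y - 1) + ((n - wt y : ℕ) : ℝ) * φ (wt y + 1) := by
  rw [← Finset.sum_filter_add_sum_filter_not Finset.univ (fun i => y i = true)]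
  have h1 : ∀ i ∈ Finset.univ.filter (fun i => y i = true),
      φ (wt (flipv y i)) = φ (wt y - 1) := by
    intro i hi
    rw [wt_flipv, if_pos (Finset.mem_filter.1 hi).2]
  have h2 : ∀ i ∈ Finset.univ.filter (fun i => ¬ (y i = true)),
      φ (wt (flipv y i)) = φ (wt y + 1) := by
    intro i hi
    rw [wt_flipv, if_neg (Finset.mem_filter.1 hi).2]
  rw [Finset.sum_congr rfl h1, Finset.sum_congr rfl h2, Finset.sum_const, Finset.sum_const]
  have hc1 : (Finset.univ.filter (fun i => y i = true)).card = wt y := (wt_eq y).symm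
  have hc2 : (Finset.univ.filter (fun i => ¬ (y i = true))).card = n - wt y := by
    have h := Finset.card_filter_add_card_filter_not
      (s := (Finset.univ : Finset (Fin n))) (p := fun i => y i = true)
    simp only [Finset.card_univ, Fintype.card_fin] at h
    omega
  rw [hc1, hc2, nsmul_eq_mul, nsmul_eq_mul]


/-- For the Green's function `𝔾` of the hypercube `Q_n` and a vertex `x` at
Hamming distance `k` from the all-zero string `𝟎`,
`𝔾(𝟎,x) − 𝔾(𝟏,x) = 2^{−n} Σ_{j=k}^{n−k−1} (C(n,j+1) + … + C(n,n))/C(n−1,j)`, with the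
convention that a sum `Σ_{j=b}^{a}` with `b > a` is the negative of the corresponding reversed
sum (formalized by the difference of the two one-sided sums below, at most one of which is
nonempty). -/
theorem green_function_hypercube_antipodal_difference
    (n : ℕ)
    -- the Green's function `𝔾` of `Q_n` (it is `n`-regular with `vol(Q_n) = n·2^n`)
    (𝔾 : Matrix (Fin n → Bool) (Fin n → Bool) ℝ)
    (hG1 : ∀ x y : Fin n → Bool,
      (𝔾 * (1 - ((Matrix.diagonal fun _ => ((n : ℝ))⁻¹ :
              Matrix (Fin n → Bool) (Fin n → Bool) ℝ))
          * (hypercubeGraph n).adjMatrix ℝ)) x y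
        = (if x = y then (1 : ℝ) else 0) - (n : ℝ) / ((n : ℝ) * 2 ^ n))
    (hG2 : ∀ x : Fin n → Bool, ∑ y, 𝔾 x y = 0)
    (x : Fin n → Bool) (k : ℕ) (hk : hammingDist x (fun _ => false) = k) :
    𝔾 (fun _ => false) x - 𝔾 (fun _ => true) x
      = ((2 : ℝ) ^ n)⁻¹ *
          ((∑ j ∈ Finset.Ico k (n - k),
              (∑ i ∈ Finset.Icc (j + 1) n, (n.choose i : ℝ)) / ((n - 1).choose j : ℝ))
           - ∑ j ∈ Finset.Ico (n - k) k,
              (∑ i ∈ Finset.Icc (j + 1) n, (n.choose i : ℝ)) / ((n - 1).choose j : ℝ)) := by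
  classical
  rcases Nat.eq_zero_or_pos n with rfl | hnpos
  · have hx : (fun _ => false : Fin 0 → Bool) = (fun _ => true) := funext fun i => i.elim0
    have hk0 : k = 0 := by
      rw [← hk]; exact Nat.le_zero.1 (wt_le x)
    subst hk0
    rw [hx]
    simp
  have hn : 1 ≤ n := hnpos
  have hn' : (n:ℝ) ≠ 0 := Nat.cast_ne_zero.2 (by omega)
  have h2n : ((2:ℝ)^n) ≠ 0 := by positivity
  set v0 : Fin n → Bool := (fun _ => false) with hv0
  set v1 : Fin n → Bool := (fun _ => true) with hv1
  have hv01 : v0 ≠ v1 := by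
    intro h
    have := congrFun h ⟨0, hnpos⟩
    simp [hv0, hv1] at this
  set c : ℝ := ((2:ℝ)^n)⁻¹ with hc
  have hcc : c * (2:ℝ)^n = 1 := inv_mul_cancel₀ h2n
  set g : (Fin n → Bool) → ℝ := fun y => 𝔾 v0 y - 𝔾 v1 y with hg
  set f : (Fin n → Bool) → ℝ := fun y => c * Ff n (wt y) with hf
  set hh : (Fin n → Bool) → ℝ := fun y => g y - f y with hhh
  -- row equation
  have row : ∀ a y : Fin n → Bool,
      𝔾 a y - (n:ℝ)⁻¹ * ∑ z, (if hammingDist z y = 1 then 𝔾 a z else 0)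
        = (if a = y then (1:ℝ) else 0) - (n : ℝ) / ((n : ℝ) * 2 ^ n) := by
    intro a y
    have h := hG1 a y
    rw [Matrix.mul_sub, Matrix.mul_one, Matrix.sub_apply, Matrix.mul_apply] at h
    simp only [Matrix.diagonal_mul, SimpleGraph.adjMatrix_apply] at h
    simp only [hypercubeGraph] at h
    rw [← h]
    congr 1
    rw [Finset.mul_sum]
    apply Finset.sum_congr rfl
    intro z _
    split_ifs with hz <;> simp [hz, mul_comm]
  -- recurrence for g
  have grec : ∀ y, (n:ℝ) * g y - ∑ i, g (flipv y i)
      = (n:ℝ) * ((if v0 = y then (1:ℝ) else 0) - (if v1 = y then 1 else 0)) := by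
    intro y
    have h0 := row v0 y
    have h1 := row v1 y
    have hs : ∑ z, (if hammingDist z y = 1 then 𝔾 v0 z else 0)
        - ∑ z, (if hammingDist z y = 1 then 𝔾 v1 z else 0) = ∑ i, g (flipv y i) := by
      rw [← sum_neighbors y g, ← Finset.sum_sub_distrib]
      apply Finset.sum_congr rfl
      intro z _
      split_ifs with hz <;> simp [hg]
    have hinv : (n:ℝ) * (n:ℝ)⁻¹ = 1 := mul_inv_cancel₀ hn'
    linear_combination (n:ℝ) * h0 - (n:ℝ) * h1 + (∑ i, g (flipv y i)) * hinv
      + (n:ℝ) * (n:ℝ)⁻¹ * hs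
  -- recurrence for f
  have frec : ∀ y, (n:ℝ) * f y - ∑ i, f (flipv y i)
      = (n:ℝ) * ((if v0 = y then (1:ℝ) else 0) - (if v1 = y then 1 else 0)) := by
    intro y
    have hw := wt_le y
    have hsum : ∑ i, f (flipv y i)
        = (wt y : ℝ) * (c * Ff n (wt y - 1)) + ((n - wt y : ℕ):ℝ) * (c * Ff n (wt y + 1)) :=
      sum_flipv_wt y (fun m => c * Ff n m)
    have hFr := Frec n (wt y) hn hw
    have hy0 : (v0 = y) ↔ wt y = 0 := by
      constructor
      · rintro rfl; exact hammingDist_self v0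
      · intro h; exact (hammingDist_eq_zero.1 h).symm
    have hy1 : (v1 = y) ↔ wt y = n := by
      constructor
      · rintro rfl; exact (wt_n_iff v1).2 rfl
      · intro h; exact ((wt_n_iff y).1 h).symm
    have hfy : f y = c * Ff n (wt y) := rfl
    rcases eq_or_ne (wt y) 0 with h0 | h0
    · have hvy0 : v0 = y := hy0.2 h0
      have hvy1 : ¬ (v1 = y) := fun h => by have := hy1.1 h; omega
      rw [if_pos h0] at hFr
      rw [hfy, hsum, h0, if_pos hvy0, if_neg hvy1]
      rw [h0] at hFr
      norm_num at hFr ⊢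
      linear_combination c * hFr + (n:ℝ) * hcc
    rcases eq_or_ne (wt y) n with h1 | h1
    · have hvy1 : v1 = y := hy1.2 h1
      have hvy0 : ¬ (v0 = y) := fun h => by have := hy0.1 h; omega
      rw [if_neg h0, if_pos h1] at hFr
      rw [h1] at hFr
      rw [hfy, hsum, h1, if_neg hvy0, if_pos hvy1]
      norm_num at hFr ⊢
      linear_combination c * hFr - (n:ℝ) * hcc
    · have hvy0 : ¬ (v0 = y) := fun h => by have := hy0.1 h; omega
      have hvy1 : ¬ (v1 = y) := fun h => by have := hy1.1 h; omega
      rw [if_neg h0, if_neg h1] at hFr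
      rw [hfy, hsum, if_neg hvy0, if_neg hvy1, Nat.cast_sub hw]
      linear_combination c * hFr
  -- harmonicity of hh
  have hharm : ∀ y, ∑ i, hh (flipv y i) = (n:ℝ) * hh y := by
    intro y
    have h1 := grec y
    have h2 := frec y
    have h3 : ∑ i, hh (flipv y i) = ∑ i, g (flipv y i) - ∑ i, f (flipv y i) := by
      rw [← Finset.sum_sub_distrib]
    have h4 : hh y = g y - f y := rfl
    linear_combination h3 - h1 + h2 + (n:ℝ) * h4
  -- energy argument
  have flipsum : ∀ i : Fin n, ∑ y, (hh (flipv y i))^2 = ∑ y, (hh y)^2 := by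
    intro i
    exact Fintype.sum_bijective (fun y => flipv y i) (flipv_equiv_aux i) _ _ (fun y => rfl)
  have energy : ∑ y, ∑ i, (hh (flipv y i) - hh y)^2 = 0 := by
    have inner : ∀ y, ∑ i, (hh (flipv y i) - hh y)^2
        = (∑ i, (hh (flipv y i))^2) - 2 * ((∑ i, hh (flipv y i)) * hh y)
          + (n:ℝ) * (hh y)^2 := by
      intro y
      rw [Finset.sum_congr rfl (fun i _ => (by ring :
        (hh (flipv y i) - hh y)^2 = (hh (flipv y i))^2 - 2 * hh y * hh (flipv y i) + (hh y)^2))]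
      rw [Finset.sum_add_distrib, Finset.sum_sub_distrib, ← Finset.mul_sum, Finset.sum_const,
        Finset.card_univ, Fintype.card_fin, nsmul_eq_mul]
      ring
    rw [Finset.sum_congr rfl (fun y _ => inner y)]
    rw [Finset.sum_add_distrib, Finset.sum_sub_distrib]
    have e1 : ∑ y, ∑ i, (hh (flipv y i))^2 = (n:ℝ) * ∑ y, (hh y)^2 := by
      rw [Finset.sum_comm, Finset.sum_congr rfl (fun i _ => flipsum i), Finset.sum_const,
        Finset.card_univ, Fintype.card_fin, nsmul_eq_mul]
    have e2 : ∑ y, 2 * ((∑ i, hh (flipv y i)) * hh y) = 2 * ((n:ℝ) * ∑ y, (hh y)^2) := by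
      have h5 : ∀ y : Fin n → Bool,
          2 * ((∑ i, hh (flipv y i)) * hh y) = 2 * (n:ℝ) * (hh y)^2 := by
        intro y; rw [hharm y]; ring
      rw [Finset.sum_congr rfl fun y _ => h5 y, ← Finset.mul_sum]
      ring
    rw [e1, e2, ← Finset.mul_sum]
    ring
  have hedge : ∀ y (i : Fin n), hh (flipv y i) = hh y := by
    intro y i
    have h1 := (Finset.sum_eq_zero_iff_of_nonneg
      (fun y _ => Finset.sum_nonneg (fun i _ => sq_nonneg _))).1 energy y (Finset.mem_univ y)
    have h2 := (Finset.sum_eq_zero_iff_of_nonneg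
      (fun i _ => sq_nonneg _)).1 h1 i (Finset.mem_univ i)
    have h3 : hh (flipv y i) - hh y = 0 := by
      exact pow_eq_zero_iff (two_ne_zero) |>.1 h2
    linarith
  -- hh is constant
  have hconst : ∀ y, hh y = hh v0 := by
    suffices hs : ∀ m, ∀ y : Fin n → Bool, wt y = m → hh y = hh v0 by
      exact fun y => hs (wt y) y rfl
    intro m
    induction m with
    | zero =>
      intro y hy
      rw [show y = v0 from hammingDist_eq_zero.1 hy]
    | succ m ih =>
      intro y hy
      have hne : (Finset.univ.filter fun i => y i = true).Nonempty := by
        rw [← Finset.card_pos, ← wt_eq, hy]; omega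
      obtain ⟨i, hi⟩ := hne
      have hyi : y i = true := (Finset.mem_filter.1 hi).2
      have hwm : wt (flipv y i) = m := by rw [wt_flipv, if_pos hyi, hy]; omega
      rw [← hedge y i]
      exact ih _ hwm
  -- sum of f is zero
  have hfsum : ∑ y, f y = 0 := by
    have hcomp : ∀ y : Fin n → Bool, f (fun i => !y i) = - f y := by
      intro y
      show c * Ff n (wt fun i => !y i) = -(c * Ff n (wt y))
      rw [wt_comp, Fneg n (wt y) (wt_le y)]
      ring
    let negE : (Fin n → Bool) ≃ (Fin n → Bool) :=
      ⟨fun y i => !y i, fun y i => !y i,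
        fun y => funext fun i => Bool.not_not _, fun y => funext fun i => Bool.not_not _⟩
    have h1 : ∑ y, f (negE y) = ∑ y, f y := Equiv.sum_comp negE f
    have h2 : ∑ y, f (negE y) = - ∑ y, f y := by
      rw [← Finset.sum_neg_distrib]
      exact Finset.sum_congr rfl fun y _ => hcomp y
    linarith
  -- sum of hh
  have hhsum : ∑ y, hh y = 0 := by
    have h1 : ∑ y, hh y = (∑ y, 𝔾 v0 y - ∑ y, 𝔾 v1 y) - ∑ y, f y := by
      rw [← Finset.sum_sub_distrib, ← Finset.sum_sub_distrib]
    rw [h1, hG2 v0, hG2 v1, hfsum]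
    ring
  have hcard : (Fintype.card (Fin n → Bool) : ℝ) = 2^n := by
    simp [Fintype.card_fun]
  have hh0 : hh v0 = 0 := by
    have h1 : ∑ y, hh y = (2:ℝ)^n * hh v0 := by
      rw [Finset.sum_congr rfl (fun y _ => hconst y), Finset.sum_const, Finset.card_univ,
        nsmul_eq_mul, ← hcard]
    rw [hhsum] at h1
    have h2 : (2:ℝ)^n * hh v0 = 0 := h1.symm
    exact (mul_eq_zero.1 h2).resolve_left h2n
  have hhx : hh x = 0 := by rw [hconst x, hh0]
  have hgx : g x = f x := by
    have : g x - f x = 0 := hhx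
    linarith
  -- finish
  have hwx : wt x = k := hk
  have hFv := Fval n k
  simp only [Tf] at hFv
  show g x = _
  rw [hgx, hFv]
  show ((2:ℝ)^n)⁻¹ * Ff n (wt x) = ((2:ℝ)^n)⁻¹ * Ff n k
  rw [hwx]
end
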